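/- arXiv:2107.08989 — 5 statements merged into one kernel-verified Lean document; each statement's English description precedes it below -/
import Mathlib

section
/- Let P : ℕ → ℕ → ℕ be the function determined by P(0,t) = 1 for every t ≥ 0, and, for every s ≥ 1 and t ≥ 1, P(s,t) = ∑_{i=1}^{⌈t/s⌉} P(s−1, t − s(i−1)). Then for every positive integer n, the number p(n) of partitions of n satisfies p(n) = ∑_{i=0}^{⌊n/2⌋} P(i, n+1−2i). -/
section PartitionAux

lemma mem_le_sum {m : Multiset ℕ} {x : ℕ} (h : x ∈ m) : x ≤ m.sum := by
  obtain ⟨r, rfl⟩ := Multiset.exists_cons_of_mem h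
  simp

def Cfin (s t : ℕ) : Finset (Multiset ℕ) :=
  ((s • (Finset.range (t+1)).val).powerset.toFinset).filter
    (fun m => Multiset.card m ≤ s ∧ m.sum ≤ t ∧ ∀ x ∈ m, 0 < x)

lemma mem_Cfin {s t : ℕ} {m : Multiset ℕ} :
    m ∈ Cfin s t ↔ Multiset.card m ≤ s ∧ m.sum ≤ t ∧ ∀ x ∈ m, 0 < x := by
  constructor
  · intro h; exact (Finset.mem_filter.mp h).2
  · intro h
    refine Finset.mem_filter.mpr ⟨?_, h⟩
    rw [Multiset.mem_toFinset, Multiset.mem_powerset, Multiset.le_iff_count]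
    intro a
    rw [Multiset.count_nsmul, Finset.range_val]
    by_cases ha : a < t + 1
    · have h1 : 1 ≤ Multiset.count a (Multiset.range (t+1)) :=
        Multiset.one_le_count_iff_mem.mpr (Multiset.mem_range.mpr ha)
      calc Multiset.count a m ≤ Multiset.card m := Multiset.count_le_card a m
        _ ≤ s := h.1
        _ ≤ s * Multiset.count a (Multiset.range (t+1)) := Nat.le_mul_of_pos_right _ h1
    · have : Multiset.count a m = 0 := by
        rw [Multiset.count_eq_zero]
        intro hm
        have := mem_le_sum hm
        omega
      omega


lemma sum_map_sub_aux {j : ℕ} (m : Multiset ℕ) (h : ∀ x ∈ m, j ≤ x) :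
    (m.map (· - j)).sum + j * Multiset.card m = m.sum := by
  induction m using Multiset.induction_on with
  | empty => simp
  | cons a s ih =>
    simp only [Multiset.map_cons, Multiset.sum_cons, Multiset.card_cons]
    have ha : j ≤ a := h a (Multiset.mem_cons_self a s)
    have := ih (fun x hx => h x (Multiset.mem_cons_of_mem hx))
    rw [Nat.mul_succ]
    omega

lemma map_sub_map_add {j : ℕ} (m : Multiset ℕ) (h : ∀ x ∈ m, j ≤ x) :
    (m.map (· - j)).map (· + j) = m := by
  rw [Multiset.map_map]
  calc m.map ((· + j) ∘ (· - j)) = m.map id := Multiset.map_congr rfl (fun x hx => by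
        simp only [Function.comp_apply, id_eq]; have := h x hx; omega)
    _ = m := Multiset.map_id m

lemma map_add_map_sub {j : ℕ} (m : Multiset ℕ) :
    (m.map (· + j)).map (· - j) = m := by
  rw [Multiset.map_map]
  calc m.map ((· - j) ∘ (· + j)) = m.map id := Multiset.map_congr rfl (fun x _ => by
        simp only [Function.comp_apply, id_eq]; omega)
    _ = m := Multiset.map_id m

lemma sum_map_add (m : Multiset ℕ) (j : ℕ) :
    (m.map (· + j)).sum = m.sum + j * Multiset.card m := by
  induction m using Multiset.induction_on with
  | empty => simp
  | cons a s ih => simp [ih]; ring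

noncomputable def jval (s : ℕ) (m : Multiset ℕ) : ℕ :=
  if h : Multiset.card m = s + 1 then
    m.toFinset.min' (Multiset.toFinset_nonempty.mpr (by rintro rfl; simp at h)) else 0

noncomputable def strip (s : ℕ) (m : Multiset ℕ) : Multiset ℕ :=
  (m.filter (fun x => jval s m < x)).map (· - jval s m)

lemma jval_mem {s : ℕ} {m : Multiset ℕ} (h : Multiset.card m = s + 1) : jval s m ∈ m := by
  rw [jval, dif_pos h]
  exact Multiset.mem_toFinset.mp (Finset.min'_mem _ _)

lemma jval_le {s : ℕ} {m : Multiset ℕ} {x : ℕ} (hx : x ∈ m) : jval s m ≤ x := by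
  rw [jval]
  split
  · exact Finset.min'_le _ _ (Multiset.mem_toFinset.mpr hx)
  · exact Nat.zero_le x

lemma filter_not_eq_replicate {j : ℕ} (m : Multiset ℕ) (hge : ∀ x ∈ m, j ≤ x) :
    m.filter (fun x => ¬ j < x) =
      Multiset.replicate (Multiset.card (m.filter (fun x => ¬ j < x))) j := by
  rw [Multiset.eq_replicate_card]
  intro b hb
  have h1 := Multiset.of_mem_filter hb
  have h2 := hge b (Multiset.mem_of_mem_filter hb)
  omega


lemma jval_eq_zero {s : ℕ} {m : Multiset ℕ} (h : Multiset.card m ≠ s + 1) :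
    jval s m = 0 := by rw [jval, dif_neg h]

lemma le_jval {s j : ℕ} {m : Multiset ℕ} (hc : Multiset.card m = s + 1)
    (h : ∀ x ∈ m, j ≤ x) : j ≤ jval s m := h _ (jval_mem hc)

lemma strip_eq_self {s : ℕ} {m : Multiset ℕ} (h : Multiset.card m ≠ s + 1)
    (hpos : ∀ x ∈ m, 0 < x) : strip s m = m := by
  simp only [strip, jval_eq_zero h]
  rw [Multiset.filter_eq_self.mpr hpos]
  calc m.map (· - 0) = m.map id := Multiset.map_congr rfl (fun x _ => by simp)
    _ = m := Multiset.map_id m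

lemma card_smul_le_sum {j : ℕ} (m : Multiset ℕ) (h : ∀ x ∈ m, j ≤ x) :
    Multiset.card m * j ≤ m.sum := by
  induction m using Multiset.induction_on with
  | empty => simp
  | cons a sm ih =>
    simp only [Multiset.card_cons, Multiset.sum_cons]
    have := ih (fun x hx => h x (Multiset.mem_cons_of_mem hx))
    have := h a (Multiset.mem_cons_self a sm)
    rw [Nat.succ_mul]
    omega


lemma card_smul_le_sum' {j : ℕ} (m : Multiset ℕ) (h : ∀ x ∈ m, j ≤ x) :
    j * Multiset.card m ≤ m.sum := by
  rw [mul_comm]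
  exact card_smul_le_sum m h

lemma Cfin_rec (s t : ℕ) :
    (Cfin (s+1) t).card =
      ∑ j ∈ Finset.range (t/(s+1)+1), (Cfin s (t - (s+1)*j)).card := by
  classical
  rw [← Finset.card_sigma]
  apply Finset.card_bij'
    (i := fun m _ => (⟨jval s m, strip s m⟩ : Σ _ : ℕ, Multiset ℕ))
    (j := fun p _ => if p.1 = 0 then p.2
      else p.2.map (· + p.1) + Multiset.replicate (s + 1 - Multiset.card p.2) p.1)
  · -- hi : lands in sigma finset
    intro m hm
    obtain ⟨hcard, hsum, hpos⟩ := mem_Cfin.mp hm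
    have hjle : ∀ x ∈ m, jval s m ≤ x := fun x hx => jval_le hx
    set a := jval s m with ha
    set fp := m.filter (fun x => a < x) with hfp
    set fn := m.filter (fun x => ¬ a < x) with hfn
    have hsplit : fp + fn = m := Multiset.filter_add_not _ m
    have hfnrep : fn = Multiset.replicate (Multiset.card fn) a :=
      filter_not_eq_replicate m hjle
    have hfc : Multiset.card fp + Multiset.card fn = Multiset.card m := by
      rw [← Multiset.card_add, hsplit]
    have hfpge : ∀ x ∈ fp, a ≤ x := fun x hx =>
      le_of_lt (Multiset.of_mem_filter hx)
    have hsum_strip : (strip s m).sum + a * Multiset.card fp = fp.sum :=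
      sum_map_sub_aux fp hfpge
    have hsum_fn : fn.sum = Multiset.card fn * a := by
      rw [hfnrep]; simp [Multiset.sum_replicate, Multiset.card_replicate]
    have hsum_split : fp.sum + fn.sum = m.sum := by
      rw [← Multiset.sum_add, hsplit]
    have hcs : Multiset.card (strip s m) = Multiset.card fp := by
      simp [strip, ← ha, ← hfp]
    rw [Finset.mem_sigma]
    dsimp only
    by_cases hc : Multiset.card m = s + 1
    · have hma : (s+1) * a ≤ m.sum := by
        have := card_smul_le_sum m hjle
        rw [hc] at this
        omega
      have hjrange : a ≤ t / (s+1) := by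
        rw [Nat.le_div_iff_mul_le (Nat.succ_pos s)]
        calc a * (s+1) = (s+1) * a := mul_comm _ _
          _ ≤ m.sum := hma
          _ ≤ t := hsum
      have hane : a ∈ m := jval_mem hc
      have hanfn : a ∈ fn := by
        rw [hfn, Multiset.mem_filter]; exact ⟨hane, by omega⟩
      have hfn0 : fn ≠ 0 := fun h => by
        rw [h] at hanfn; exact absurd hanfn (Multiset.notMem_zero a)
      have hfn1 : 0 < Multiset.card fn := Multiset.card_pos.mpr hfn0
      constructor
      · rw [Finset.mem_range]; omega
      · rw [mem_Cfin]
        refine ⟨by omega, ?_, ?_⟩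
        · -- sum bound
          have hm1 : a * (Multiset.card fp + Multiset.card fn) =
              a * Multiset.card fp + a * Multiset.card fn := by ring
          have hm2 : Multiset.card fn * a = a * Multiset.card fn := by ring
          have hm3 : a * (Multiset.card fp + Multiset.card fn) = (s+1) * a := by
            rw [hfc, hc]; ring
          omega
        · intro x hx
          simp only [strip, ← ha, ← hfp, Multiset.mem_map] at hx
          obtain ⟨y, hy, rfl⟩ := hx
          have := Multiset.of_mem_filter hy
          omega
    · have ha0 : a = 0 := jval_eq_zero hc
      constructor
      · rw [Finset.mem_range, ha0]; exact Nat.succ_pos _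
      · rw [mem_Cfin, strip_eq_self hc hpos]
        refine ⟨by omega, ?_, hpos⟩
        rw [ha0]
        omega
  · -- hj : maps back into Cfin (s+1) t
    rintro ⟨j, m'⟩ hp
    rw [Finset.mem_sigma, Finset.mem_range] at hp
    dsimp only at hp ⊢
    obtain ⟨hj, hm'⟩ := hp
    rw [mem_Cfin] at hm'
    obtain ⟨hc', hs', hp'⟩ := hm'
    have hjt : (s+1) * j ≤ t := by
      have h1 : j ≤ t / (s+1) := by omega
      calc (s+1)*j = j*(s+1) := by ring
        _ ≤ t := (Nat.le_div_iff_mul_le (Nat.succ_pos s)).mp h1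
    by_cases hj0 : j = 0
    · subst hj0
      rw [if_pos rfl, mem_Cfin]
      refine ⟨by omega, by omega, hp'⟩
    · rw [if_neg hj0, mem_Cfin]
      refine ⟨?_, ?_, ?_⟩
      · rw [Multiset.card_add, Multiset.card_map, Multiset.card_replicate]; omega
      · rw [Multiset.sum_add, sum_map_add, Multiset.sum_replicate, smul_eq_mul]
        have hkey : j * Multiset.card m' + (s + 1 - Multiset.card m') * j
            = (s+1) * j := by
          have h1 : Multiset.card m' + (s + 1 - Multiset.card m') = s + 1 := by omega
          calc j * Multiset.card m' + (s + 1 - Multiset.card m') * j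
              = (Multiset.card m' + (s + 1 - Multiset.card m')) * j := by ring
            _ = (s+1)*j := by rw [h1]
        omega
      · intro x hx
        rw [Multiset.mem_add] at hx
        rcases hx with hx | hx
        · rw [Multiset.mem_map] at hx
          obtain ⟨y, _, rfl⟩ := hx
          omega
        · rw [Multiset.mem_replicate] at hx
          omega
  · -- left_inv
    intro m hm
    dsimp only
    obtain ⟨hcard, hsum, hpos⟩ := mem_Cfin.mp hm
    by_cases hc : Multiset.card m = s + 1
    · have hjle : ∀ x ∈ m, jval s m ≤ x := fun x hx => jval_le hx
      have ha0 : jval s m ≠ 0 := by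
        have := hpos _ (jval_mem hc)
        omega
      rw [if_neg ha0]
      set a := jval s m with ha
      set fp := m.filter (fun x => a < x) with hfp
      set fn := m.filter (fun x => ¬ a < x) with hfn
      have hsplit : fp + fn = m := Multiset.filter_add_not _ m
      have hfnrep : fn = Multiset.replicate (Multiset.card fn) a :=
        filter_not_eq_replicate m hjle
      have hfc : Multiset.card fp + Multiset.card fn = Multiset.card m := by
        rw [← Multiset.card_add, hsplit]
      have hcs : Multiset.card (strip s m) = Multiset.card fp := by
        simp [strip, ← ha, ← hfp]
      have hmap : (strip s m).map (· + a) = fp := by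
        simp only [strip, ← ha, ← hfp]
        exact map_sub_map_add fp (fun x hx => le_of_lt (Multiset.of_mem_filter hx))
      rw [hmap, hcs]
      have hrep : s + 1 - Multiset.card fp = Multiset.card fn := by omega
      rw [hrep, ← hfnrep, hsplit]
    · rw [jval_eq_zero hc, if_pos rfl]
      exact strip_eq_self hc hpos
  · -- right_inv
    rintro ⟨j, m'⟩ hp
    rw [Finset.mem_sigma, Finset.mem_range] at hp
    dsimp only at hp ⊢
    obtain ⟨hj, hm'⟩ := hp
    rw [mem_Cfin] at hm'
    obtain ⟨hc', hs', hp'⟩ := hm'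
    by_cases hj0 : j = 0
    · subst hj0
      rw [if_pos rfl]
      have hne : Multiset.card m' ≠ s + 1 := by omega
      rw [jval_eq_zero hne, strip_eq_self hne hp']
    · rw [if_neg hj0]
      set G := m'.map (· + j) + Multiset.replicate (s + 1 - Multiset.card m') j with hG
      have hcardG : Multiset.card G = s + 1 := by
        rw [hG, Multiset.card_add, Multiset.card_map, Multiset.card_replicate]; omega
      have hGge : ∀ x ∈ G, j ≤ x := by
        intro x hx
        rw [hG, Multiset.mem_add] at hx
        rcases hx with hx | hx
        · rw [Multiset.mem_map] at hx; obtain ⟨y, _, rfl⟩ := hx; omega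
        · rw [Multiset.mem_replicate] at hx; omega
      have hjmem : j ∈ G := by
        rw [hG, Multiset.mem_add]
        right
        rw [Multiset.mem_replicate]
        exact ⟨by omega, rfl⟩
      have hjv : jval s G = j :=
        le_antisymm (jval_le hjmem) (le_jval hcardG hGge)
      have hstrip : strip s G = m' := by
        simp only [strip, hjv]
        rw [hG]
        rw [Multiset.filter_add]
        have h1 : (m'.map (· + j)).filter (fun x => j < x) = m'.map (· + j) :=
          Multiset.filter_eq_self.mpr (by
            intro x hx
            rw [Multiset.mem_map] at hx
            obtain ⟨y, hy, rfl⟩ := hx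
            have := hp' y hy
            omega)
        have h2 : (Multiset.replicate (s + 1 - Multiset.card m') j).filter
            (fun x => j < x) = 0 :=
          Multiset.filter_eq_nil.mpr (by
            intro x hx
            rw [Multiset.mem_replicate] at hx
            omega)
        rw [h1, h2, add_zero]
        exact map_add_map_sub m'
      rw [hjv, hstrip]

lemma Cfin_card_eq (P : ℕ → ℕ → ℕ)
    (h0 : ∀ t : ℕ, P 0 t = 1)
    (hrec : ∀ s t : ℕ, 1 ≤ s → 1 ≤ t →
      P s t = ∑ i ∈ Finset.Icc 1 (t ⌈/⌉ s), P (s - 1) (t - s * (i - 1))) :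
    ∀ s t : ℕ, (Cfin s t).card = P s (t+1) := by
  intro s
  induction s with
  | zero =>
    intro t
    have : Cfin 0 t = {0} := by
      ext m
      rw [mem_Cfin, Finset.mem_singleton]
      constructor
      · intro ⟨h1, _, _⟩
        exact Multiset.card_eq_zero.mp (Nat.le_zero.mp h1)
      · rintro rfl
        simp
    rw [this, Finset.card_singleton, h0]
  | succ s ih =>
    intro t
    rw [Cfin_rec, hrec (s+1) (t+1) (by omega) (by omega)]
    have hceil : (t+1) ⌈/⌉ (s+1) = t/(s+1) + 1 := by
      rw [Nat.ceilDiv_eq_add_pred_div]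
      have : t + 1 + (s+1) - 1 = t + (s+1) := by omega
      rw [this, Nat.add_div_right _ (Nat.succ_pos s)]
    rw [hceil]
    apply Finset.sum_nbij' (i := fun j => j + 1) (j := fun i => i - 1)
    · intro j hj
      rw [Finset.mem_range] at hj
      rw [Finset.mem_Icc]
      omega
    · intro i hi
      rw [Finset.mem_Icc] at hi
      rw [Finset.mem_range]
      omega
    · intro j hj; omega
    · intro i hi
      rw [Finset.mem_Icc] at hi
      omega
    · intro j hj
      rw [Finset.mem_range] at hj
      have hle : (s+1) * j ≤ t := by
        have h1 : j ≤ t/(s+1) := by omega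
        calc (s+1)*j = j*(s+1) := by ring
          _ ≤ t := (Nat.le_div_iff_mul_le (Nat.succ_pos s)).mp h1
      rw [ih]
      have h2 : s + 1 - 1 = s := by omega
      have h3 : j + 1 - 1 = j := by omega
      rw [h2, h3]
      congr 1
      omega

noncomputable def buildPart (n : ℕ) (p : Σ _ : ℕ, Multiset ℕ)
    (hp : p ∈ (Finset.range (n/2+1)).sigma (fun i => Cfin i (n - 2*i))) :
    Nat.Partition n where
  parts := p.2.map (· + 2) + Multiset.replicate (p.1 - Multiset.card p.2) 2
    + Multiset.replicate (n - 2*p.1 - p.2.sum) 1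
  parts_pos := by
    intro x hx
    rw [Multiset.mem_add] at hx
    rcases hx with hx | hx
    · rw [Multiset.mem_add] at hx
      rcases hx with hx | hx
      · rw [Multiset.mem_map] at hx; obtain ⟨y, _, rfl⟩ := hx; omega
      · rw [Multiset.mem_replicate] at hx; omega
    · rw [Multiset.mem_replicate] at hx; omega
  parts_sum := by
    rw [Finset.mem_sigma, Finset.mem_range] at hp
    obtain ⟨hi, hm⟩ := hp
    rw [mem_Cfin] at hm
    obtain ⟨hc, hs, _⟩ := hm
    rw [Multiset.sum_add, Multiset.sum_add, sum_map_add,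
      Multiset.sum_replicate, Multiset.sum_replicate, smul_eq_mul, smul_eq_mul]
    have h2i : 2 * p.1 ≤ n := by omega
    omega

lemma buildPart_parts (n : ℕ) (p : Σ _ : ℕ, Multiset ℕ) (hp) :
    (buildPart n p hp).parts = p.2.map (· + 2)
      + Multiset.replicate (p.1 - Multiset.card p.2) 2
      + Multiset.replicate (n - 2*p.1 - p.2.sum) 1 := rfl

lemma card_partition_eq (n : ℕ) :
    Fintype.card (Nat.Partition n) = ∑ i ∈ Finset.range (n/2+1), (Cfin i (n - 2*i)).card := by
  classical
  rw [← Finset.card_univ, ← Finset.card_sigma]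
  refine Finset.card_bij'
    (i := fun (l : Nat.Partition n) _ =>
      (⟨(l.parts.filter (fun x => 2 ≤ x)).card,
        ((l.parts.filter (fun x => 2 ≤ x)).filter (fun x => 3 ≤ x)).map (· - 2)⟩
        : Σ _ : ℕ, Multiset ℕ))
    (j := buildPart n) ?_ (fun p hp => Finset.mem_univ _) ?_ ?_
  · -- hi
    intro l _
    set F2 := l.parts.filter (fun x => 2 ≤ x) with hF2
    set A := F2.filter (fun x => 3 ≤ x) with hA
    set B := F2.filter (fun x => ¬ 3 ≤ x) with hB
    set O := l.parts.filter (fun x => ¬ 2 ≤ x) with hO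
    have hAB : A + B = F2 := Multiset.filter_add_not _ F2
    have hF2O : F2 + O = l.parts := Multiset.filter_add_not _ l.parts
    have hcAB : Multiset.card A + Multiset.card B = Multiset.card F2 := by
      rw [← Multiset.card_add, hAB]
    have hsAB : A.sum + B.sum = F2.sum := by rw [← Multiset.sum_add, hAB]
    have hsF2O : F2.sum + O.sum = l.parts.sum := by rw [← Multiset.sum_add, hF2O]
    have hsum_n : l.parts.sum = n := l.parts_sum
    have hBrep : B = Multiset.replicate (Multiset.card B) 2 := by
      rw [Multiset.eq_replicate_card]
      intro b hb
      have h1 := Multiset.of_mem_filter hb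
      have h2 := Multiset.of_mem_filter (Multiset.mem_of_mem_filter hb)
      omega
    have hOrep : O = Multiset.replicate (Multiset.card O) 1 := by
      rw [Multiset.eq_replicate_card]
      intro b hb
      have h1 := Multiset.of_mem_filter hb
      have h2 := l.parts_pos (Multiset.mem_of_mem_filter hb)
      omega
    have hsB : B.sum = 2 * Multiset.card B := by
      rw [hBrep]; simp [Multiset.sum_replicate]; ring
    have hsO : O.sum = Multiset.card O := by
      rw [hOrep]; simp [Multiset.sum_replicate]
    have hAge : ∀ x ∈ A, 2 ≤ x := fun x hx => by
      have := Multiset.of_mem_filter hx; omega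
    have hsmap : ((A.map (· - 2)).sum) + 2 * Multiset.card A = A.sum := by
      have := sum_map_sub_aux A hAge
      omega
    have hA2 : 2 * Multiset.card A ≤ A.sum := card_smul_le_sum' A hAge
    have hB2 : 2 * Multiset.card B ≤ B.sum := by omega
    rw [Finset.mem_sigma, Finset.mem_range, mem_Cfin]
    dsimp only
    refine ⟨by omega, ?_, ?_, ?_⟩
    · rw [Multiset.card_map]; omega
    · omega
    · intro x hx
      rw [Multiset.mem_map] at hx
      obtain ⟨y, hy, rfl⟩ := hx
      have := Multiset.of_mem_filter hy
      omega
  · -- left_inv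
    intro l hl
    apply Nat.Partition.ext
    rw [buildPart_parts]
    dsimp only
    set F2 := l.parts.filter (fun x => 2 ≤ x) with hF2
    set A := F2.filter (fun x => 3 ≤ x) with hA
    set B := F2.filter (fun x => ¬ 3 ≤ x) with hB
    set O := l.parts.filter (fun x => ¬ 2 ≤ x) with hO
    have hAB : A + B = F2 := Multiset.filter_add_not _ F2
    have hF2O : F2 + O = l.parts := Multiset.filter_add_not _ l.parts
    have hcAB : Multiset.card A + Multiset.card B = Multiset.card F2 := by
      rw [← Multiset.card_add, hAB]
    have hsAB : A.sum + B.sum = F2.sum := by rw [← Multiset.sum_add, hAB]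
    have hsF2O : F2.sum + O.sum = l.parts.sum := by rw [← Multiset.sum_add, hF2O]
    have hsum_n : l.parts.sum = n := l.parts_sum
    have hBrep : B = Multiset.replicate (Multiset.card B) 2 := by
      rw [Multiset.eq_replicate_card]
      intro b hb
      have h1 := Multiset.of_mem_filter hb
      have h2 := Multiset.of_mem_filter (Multiset.mem_of_mem_filter hb)
      omega
    have hOrep : O = Multiset.replicate (Multiset.card O) 1 := by
      rw [Multiset.eq_replicate_card]
      intro b hb
      have h1 := Multiset.of_mem_filter hb
      have h2 := l.parts_pos (Multiset.mem_of_mem_filter hb)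
      omega
    have hsB : B.sum = 2 * Multiset.card B := by
      rw [hBrep]; simp [Multiset.sum_replicate]; ring
    have hsO : O.sum = Multiset.card O := by
      rw [hOrep]; simp [Multiset.sum_replicate]
    have hAge : ∀ x ∈ A, 2 ≤ x := fun x hx => by
      have := Multiset.of_mem_filter hx; omega
    have hsmap : ((A.map (· - 2)).sum) + 2 * Multiset.card A = A.sum := by
      have := sum_map_sub_aux A hAge
      omega
    have hmap2 : (A.map (· - 2)).map (· + 2) = A := map_sub_map_add A hAge
    rw [hmap2]
    simp only [Multiset.card_map]
    have hc1 : Multiset.card F2 - Multiset.card A = Multiset.card B := by omega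
    have hc2 : n - 2 * Multiset.card F2 - (A.map (· - 2)).sum = Multiset.card O := by
      omega
    rw [hc1, hc2, ← hBrep, ← hOrep, hAB, hF2O]
  · -- right_inv
    intro p hp
    have hp' := hp
    rw [Finset.mem_sigma, Finset.mem_range] at hp'
    obtain ⟨hi, hm⟩ := hp'
    rw [mem_Cfin] at hm
    obtain ⟨hc, hs, hposm⟩ := hm
    rw [buildPart_parts]
    set c := p.1 - Multiset.card p.2 with hcdef
    set d := n - 2*p.1 - p.2.sum with hddef
    have hf1 : ((p.2.map (· + 2) + Multiset.replicate c 2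
        + Multiset.replicate d 1).filter (fun x => 2 ≤ x))
        = p.2.map (· + 2) + Multiset.replicate c 2 := by
      rw [Multiset.filter_add, Multiset.filter_add]
      have e1 : (p.2.map (· + 2)).filter (fun x => 2 ≤ x) = p.2.map (· + 2) :=
        Multiset.filter_eq_self.mpr (by
          intro x hx
          rw [Multiset.mem_map] at hx
          obtain ⟨y, _, rfl⟩ := hx
          omega)
      have e2 : (Multiset.replicate c 2).filter (fun x => 2 ≤ x)
          = Multiset.replicate c 2 :=
        Multiset.filter_eq_self.mpr (by
          intro x hx
          rw [Multiset.mem_replicate] at hx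
          omega)
      have e3 : (Multiset.replicate d 1).filter (fun x => 2 ≤ x) = 0 :=
        Multiset.filter_eq_nil.mpr (by
          intro x hx
          rw [Multiset.mem_replicate] at hx
          omega)
      rw [e1, e2, e3, add_zero]
    rw [hf1]
    have hf2 : ((p.2.map (· + 2) + Multiset.replicate c 2).filter (fun x => 3 ≤ x))
        = p.2.map (· + 2) := by
      rw [Multiset.filter_add]
      have e1 : (p.2.map (· + 2)).filter (fun x => 3 ≤ x) = p.2.map (· + 2) :=
        Multiset.filter_eq_self.mpr (by
          intro x hx
          rw [Multiset.mem_map] at hx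
          obtain ⟨y, hy, rfl⟩ := hx
          have := hposm y hy
          omega)
      have e2 : (Multiset.replicate c 2).filter (fun x => 3 ≤ x) = 0 :=
        Multiset.filter_eq_nil.mpr (by
          intro x hx
          rw [Multiset.mem_replicate] at hx
          omega)
      rw [e1, e2, add_zero]
    rw [hf2, map_add_map_sub]
    have hcard : Multiset.card (p.2.map (· + 2) + Multiset.replicate c 2) = p.1 := by
      rw [Multiset.card_add, Multiset.card_map, Multiset.card_replicate]
      omega
    rw [hcard]

end PartitionAux

/-- If `P : ℕ → ℕ → ℕ` satisfies `P 0 t = 1` for all `t` and, for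
`s ≥ 1`, `t ≥ 1`, `P s t = ∑_{i=1}^{⌈t/s⌉} P (s-1) (t - s*(i-1))`, then for every
positive `n` the number of partitions of `n` equals `∑_{i=0}^{⌊n/2⌋} P i (n+1-2i)`. -/
theorem partition_card_eq_sum_P (P : ℕ → ℕ → ℕ)
    (h0 : ∀ t : ℕ, P 0 t = 1)
    (hrec : ∀ s t : ℕ, 1 ≤ s → 1 ≤ t →
      P s t = ∑ i ∈ Finset.Icc 1 (t ⌈/⌉ s), P (s - 1) (t - s * (i - 1)))
    (n : ℕ) (hn : 0 < n) :
    Fintype.card (Nat.Partition n) = ∑ i ∈ Finset.range (n / 2 + 1), P i (n + 1 - 2 * i) := by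
  rw [card_partition_eq]
  refine Finset.sum_congr rfl ?_
  intro i hi
  rw [Finset.mem_range] at hi
  rw [Cfin_card_eq P h0 hrec]
  congr 1
  omega
end

section
/- Define a jump of order r (r ≥ 1) on a list of positive integers as the transformation taking a list a :: rest to the list (a − r) :: r :: rest, allowed only when a − r is not smaller than the last entry of the resulting list and r is not larger than any entry of rest. A non-ascending sequence of jumps is a finite sequence of jumps applied successively in which the orders of the jumps never increase. Then a list l of positive integers is obtainable from the singleton list [n] by some non-ascending sequence of jumps if and only if either l = [n], or l = a₁ :: a₂ :: ⋯ :: a_m with m ≥ 2, a₁ + a₂ + ⋯ + a_m = n, and 1 ≤ a₂ ≤ a₃ ≤ ⋯ ≤ a_m ≤ a₁. In particular, distinct lists obtained this way represent distinct partitions of n, so the lists reachable from [n] by non-ascending sequences of jumps are in bijection with the partitions of n. -/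
/-- A jump of order `r ≥ 1` transforms `a :: rest` into `(a - r) :: r :: rest`,
allowed only when `a - r` is at least the last entry of the resulting list and
`r` is at most every entry of `rest`. -/
def IsJump (r : ℕ) (l l' : List ℕ) : Prop :=
  1 ≤ r ∧ ∃ (a : ℕ) (rest : List ℕ),
    l = a :: rest ∧
    l' = (a - r) :: r :: rest ∧
    (r :: rest).getLast (List.cons_ne_nil _ _) ≤ a - r ∧
    ∀ x ∈ rest, r ≤ x

/-- `NAJumpSeq r l l'` : `l'` is obtainable from `l` by a (possibly empty) sequence of
jumps whose orders are at most `r` and never increase along the sequence. -/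
inductive NAJumpSeq : ℕ → List ℕ → List ℕ → Prop where
  | refl (r : ℕ) (l : List ℕ) : NAJumpSeq r l l
  | step (r r' : ℕ) (l l' l'' : List ℕ) (hr : r' ≤ r) (hj : IsJump r' l l')
      (htail : NAJumpSeq r' l' l'') : NAJumpSeq r l l''

/-- Invariant preserved by jumps. -/
def JShape (n : ℕ) (l : List ℕ) : Prop :=
  l.sum = n ∧ (l = [n] ∨ ∃ (a : ℕ) (rest : List ℕ), l = a :: rest ∧ rest ≠ [] ∧
    List.Pairwise (· ≤ ·) rest ∧ (∀ x ∈ rest, 1 ≤ x) ∧ rest.getLastD 0 ≤ a)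

lemma jump_preserves {n r : ℕ} {l l' : List ℕ} (hj : IsJump r l l') (h : JShape n l) :
    JShape n l' := by
  obtain ⟨hr1, a, rest, hl, hl', hlast, hall⟩ := hj
  obtain ⟨hsum, hshape⟩ := h
  rw [List.getLast_eq_getLastD] at hlast
  -- rest is sorted, positive
  have hrest : List.Pairwise (· ≤ ·) rest ∧ (∀ x ∈ rest, 1 ≤ x) := by
    rcases hshape with h1 | ⟨a', rest', heq, _, hs, hp, _⟩
    · rw [hl] at h1
      simp only [List.cons.injEq] at h1
      obtain ⟨rfl, rfl⟩ := h1
      simp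
    · rw [hl] at heq
      obtain ⟨rfl, rfl⟩ : a = a' ∧ rest = rest' := by cases heq; exact ⟨rfl, rfl⟩
      exact ⟨hs, hp⟩
  have hra : r ≤ a := by
    have : r ≤ rest.getLastD r := by
      cases rest with
      | nil => simp
      | cons b t =>
        have := hall ((b :: t).getLast (by simp)) (List.getLast_mem _)
        rw [List.getLast_eq_getLastD] at this
        rw [List.getLastD_cons]
        exact this
    have h2 : rest.getLastD r ≤ a - r := hlast
    omega
  constructor
  · rw [hl'] ; rw [hl] at hsum ; simp at hsum ⊢ ; omega
  · right
    refine ⟨a - r, r :: rest, hl', by simp, ?_, ?_, ?_⟩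
    · exact List.pairwise_cons.mpr ⟨hall, hrest.1⟩
    · intro x hx
      rcases List.mem_cons.mp hx with rfl | hx
      · exact hr1
      · exact hrest.2 x hx
    · rw [List.getLastD_cons]
      exact hlast

lemma seq_preserves {n r : ℕ} {l l' : List ℕ} (h : NAJumpSeq r l l') (hs : JShape n l) :
    JShape n l' := by
  induction h with
  | refl => exact hs
  | step r r' l l' l'' hr hj htail ih => exact ih (jump_preserves hj hs)

lemma build (r : ℕ) : ∀ (rest : List ℕ) (a : ℕ) (l'' : List ℕ),
    List.Pairwise (· ≤ ·) rest → (∀ x ∈ rest, 1 ≤ x) → rest.getLastD 0 ≤ a →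
    rest.getLastD 0 ≤ r →
    NAJumpSeq (rest.headD r) (a :: rest) l'' →
    NAJumpSeq r [a + rest.sum] l'' := by
  intro rest
  induction rest with
  | nil => intro a l'' _ _ _ _ h ; simpa using h
  | cons b rest' ih =>
    intro a l'' hs hp hla hlr hcont
    have hs' := List.pairwise_cons.mp hs
    have hlast' : rest'.getLastD 0 ≤ a + b := by
      cases rest' with
      | nil => simp
      | cons c t =>
        have : (b :: c :: t).getLastD 0 ≤ a := hla
        rw [List.getLastD_cons] at this
        have : (c :: t).getLastD 0 ≤ (c :: t).getLastD b ∨ (c :: t).getLastD 0 = (c :: t).getLastD b := by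
          right; rfl
        omega
    have hlastr : rest'.getLastD 0 ≤ r := by
      cases rest' with
      | nil => simp
      | cons c t =>
        have : (b :: c :: t).getLastD 0 ≤ r := hlr
        rwa [List.getLastD_cons] at this
    have hb1 : 1 ≤ b := hp b (by simp)
    have hbhead : b ≤ rest'.headD r := by
      cases rest' with
      | nil =>
        simp only [List.headD_nil]
        simpa using hlr
      | cons c t => exact hs'.1 c (by simp)
    have hjump : IsJump b ((a + b) :: rest') (a :: b :: rest') := by
      refine ⟨hb1, a + b, rest', rfl, by simp, ?_, hs'.1⟩
      rw [List.getLast_eq_getLastD]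
      have : rest'.getLastD b ≤ a := by
        cases rest' with
        | nil => simpa using hla
        | cons c t =>
          have : (b :: c :: t).getLastD 0 ≤ a := hla
          rwa [List.getLastD_cons] at this
      omega
    have hcont' : NAJumpSeq (rest'.headD r) ((a + b) :: rest') l'' :=
      NAJumpSeq.step _ b _ _ _ hbhead hjump (by simpa using hcont)
    have := ih (a + b) l'' hs'.2 (fun x hx => hp x (by simp [hx])) hlast' hlastr hcont'
    simpa [add_assoc] using this

/-- A list `l` of positive integers is obtainable from `[n]` by some
non-ascending sequence of jumps iff `l = [n]` or `l = a :: rest` with `rest ≠ []`,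
total sum `n`, and `1 ≤ a₂ ≤ a₃ ≤ ⋯ ≤ aₘ ≤ a` (i.e. `rest` is sorted non-decreasingly,
its entries are positive, and its last entry is at most `a`). -/
theorem reachable_iff_partition (n : ℕ) (hn : 1 ≤ n) (l : List ℕ) :
    (∃ r : ℕ, NAJumpSeq r [n] l) ↔
      l = [n] ∨
        ∃ (a : ℕ) (rest : List ℕ),
          l = a :: rest ∧ rest ≠ [] ∧ l.sum = n ∧
          List.Pairwise (· ≤ ·) rest ∧ (∀ x ∈ rest, 1 ≤ x) ∧ rest.getLastD 0 ≤ a := by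
  constructor
  · rintro ⟨r, h⟩
    have hshape : JShape n l := seq_preserves h ⟨by simp, Or.inl rfl⟩
    obtain ⟨hsum, h1 | ⟨a, rest, hl, hne, hs, hp, hla⟩⟩ := hshape
    · exact Or.inl h1
    · exact Or.inr ⟨a, rest, hl, hne, hsum, hs, hp, hla⟩
  · rintro (rfl | ⟨a, rest, rfl, hne, hsum, hs, hp, hla⟩)
    · exact ⟨0, NAJumpSeq.refl 0 [n]⟩
    · refine ⟨n, ?_⟩
      simp only [List.sum_cons] at hsum
      have hla' : rest.getLastD 0 ≤ n := le_trans hla (by omega)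
      have := build n rest a (a :: rest) hs hp hla hla' (NAJumpSeq.refl _ _)
      rwa [hsum] at this
end

section
/- For every positive integer n, the number of divisors d(n) of n satisfies d(n) = ∑_π (−1)^{(#π)+1} · λ(π), where the sum ranges over all partitions π of n into distinct parts, #π denotes the number of parts of π, and λ(π) denotes the smallest part of π. Equivalently, the sum of the smallest parts of the partitions of n into distinct parts having an odd number of parts, minus the sum of the smallest parts of the partitions of n into distinct parts having an even number of parts, equals d(n). -/
open Finset

private def wS (n m L : ℕ) : ℤ :=
  ∑ S ∈ (Finset.Ico m (m + L)).powerset,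
    (if S.sum id = n then (-1 : ℤ) ^ S.card else 0)

private lemma wS_zero (n m : ℕ) : wS n m 0 = if n = 0 then 1 else 0 := by
  simp [wS, eq_comm]

/-- Remove the right endpoint of the window. -/
private lemma wS_succ (n m L : ℕ) :
    wS n m (L + 1) = wS n m L - (if m + L ≤ n then wS (n - (m + L)) m L else 0) := by
  have hins : Finset.Ico m (m + (L + 1)) = insert (m + L) (Finset.Ico m (m + L)) := by
    rw [show m + (L + 1) = (m + L) + 1 by ring]
    exact Nat.Ico_succ_right_eq_insert_Ico (Nat.le_add_right m L)
  have hnm : (m + L) ∉ Finset.Ico m (m + L) := by simp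
  rw [wS, hins, Finset.sum_powerset_insert hnm]
  have h2 : ∀ S ∈ (Finset.Ico m (m + L)).powerset,
      (if (insert (m + L) S).sum id = n then (-1 : ℤ) ^ (insert (m + L) S).card else 0)
        = -(if m + L ≤ n ∧ S.sum id = n - (m + L) then (-1 : ℤ) ^ S.card else 0) := by
    intro S hS
    have haS : (m + L) ∉ S := fun h => hnm ((Finset.mem_powerset.mp hS) h)
    rw [Finset.sum_insert haS, Finset.card_insert_of_notMem haS]
    simp only [id_eq]
    by_cases hc : m + L + ∑ x ∈ S, x = n
    · rw [if_pos hc, if_pos (show m + L ≤ n ∧ ∑ x ∈ S, x = n - (m + L) by omega), pow_succ]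
      ring
    · rw [if_neg hc, if_neg (show ¬(m + L ≤ n ∧ ∑ x ∈ S, x = n - (m + L)) by omega)]
      ring
  rw [Finset.sum_congr rfl h2, Finset.sum_neg_distrib]
  by_cases h : m + L ≤ n
  · simp only [if_pos h, wS, true_and, h, if_true]
    ring
  · simp only [if_neg h, wS]
    have h3 : ∀ S ∈ (Finset.Ico m (m + L)).powerset,
        (if m + L ≤ n ∧ S.sum id = n - (m + L) then (-1 : ℤ) ^ S.card else 0) = 0 := by
      intro S _; rw [if_neg (by tauto)]
    rw [Finset.sum_congr rfl h3]
    simp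

/-- Remove the left endpoint of the window. -/
private lemma wS_left (n m L : ℕ) :
    wS n m (L + 1) = wS n (m + 1) L - (if m ≤ n then wS (n - m) (m + 1) L else 0) := by
  have hins : Finset.Ico m (m + (L + 1)) = insert m (Finset.Ico (m + 1) ((m + 1) + L)) := by
    ext x
    simp only [Finset.mem_Ico, Finset.mem_insert]
    omega
  have hnm : m ∉ Finset.Ico (m + 1) ((m + 1) + L) := by simp
  rw [wS, hins, Finset.sum_powerset_insert hnm]
  have h2 : ∀ S ∈ (Finset.Ico (m + 1) ((m + 1) + L)).powerset,
      (if (insert m S).sum id = n then (-1 : ℤ) ^ (insert m S).card else 0)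
        = -(if m ≤ n ∧ S.sum id = n - m then (-1 : ℤ) ^ S.card else 0) := by
    intro S hS
    have haS : m ∉ S := fun h => hnm ((Finset.mem_powerset.mp hS) h)
    rw [Finset.sum_insert haS, Finset.card_insert_of_notMem haS]
    simp only [id_eq]
    by_cases hc : m + ∑ x ∈ S, x = n
    · rw [if_pos hc, if_pos (show m ≤ n ∧ ∑ x ∈ S, x = n - m by omega), pow_succ]
      ring
    · rw [if_neg hc, if_neg (show ¬(m ≤ n ∧ ∑ x ∈ S, x = n - m) by omega)]
      ring
  rw [Finset.sum_congr rfl h2, Finset.sum_neg_distrib]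
  by_cases h : m ≤ n
  · simp only [if_pos h, wS, true_and, h, if_true]
    ring
  · simp only [if_neg h, wS]
    have h3 : ∀ S ∈ (Finset.Ico (m + 1) ((m + 1) + L)).powerset,
        (if m ≤ n ∧ S.sum id = n - m then (-1 : ℤ) ^ S.card else 0) = 0 := by
      intro S _; rw [if_neg (by tauto)]
    rw [Finset.sum_congr rfl h3]
    simp [wS]

/-- If the window starts beyond `n`, only the empty set can contribute. -/
private lemma wS_of_lt (n m : ℕ) (h : n < m) : ∀ L, wS n m L = if n = 0 then 1 else 0 := by
  intro L
  induction L with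
  | zero => exact wS_zero n m
  | succ L ih =>
      have hc : ¬ (m + L ≤ n) := by omega
      rw [wS_succ, ih, if_neg hc]
      ring

private lemma wS_zero_left (m L : ℕ) (hm : 1 ≤ m) : wS 0 m L = 1 := by
  rw [wS_of_lt 0 m (by omega) L]; simp

private lemma wS_gt (n m L : ℕ) (h0 : 0 < n) (h : n < m) : wS n m L = 0 := by
  rw [wS_of_lt n m h L, if_neg (by omega)]

/-- `AA M n` is the coefficient of `q^n` in `∑_{s ≥ 0} q^s (q^{s+1}; q)_M`. -/
private def AA (M n : ℕ) : ℤ := ∑ s ∈ range (n + 1), wS (n - s) (s + 1) M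

private lemma tail_sum (M n : ℕ) :
    (∑ t ∈ range n, if (t + 1) + M ≤ n then wS (n - (t + 1) - M) (t + 1) M else 0)
      = if M + 1 ≤ n then AA M (n - (M + 1)) else 0 := by
  by_cases h : M + 1 ≤ n
  · rw [if_pos h]
    have hsub : range (n - (M + 1) + 1) ⊆ range n := by
      apply Finset.range_subset_range.mpr; omega
    rw [AA, ← Finset.sum_subset hsub]
    · apply Finset.sum_congr rfl
      intro t ht
      have ht' : t ≤ n - (M + 1) := by
        have := Finset.mem_range.mp ht; omega
      rw [if_pos (by omega)]
      congr 1
      omega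
    · intro t ht hnt
      have h1 := Finset.mem_range.mp ht
      have h2 : ¬ t < n - (M + 1) + 1 := fun hh => hnt (Finset.mem_range.mpr hh)
      rw [if_neg (by omega)]
  · rw [if_neg h]
    apply Finset.sum_eq_zero
    intro t _
    rw [if_neg (by omega)]

private lemma AA_rec (M n : ℕ) (hn : 1 ≤ n) :
    AA M n = if M + 1 ≤ n then AA M (n - (M + 1)) else 0 := by
  have key : ∀ t ∈ range n,
      wS (n - (t + 1)) ((t + 1) + 1) M
        = (wS n ((t + 1) + 1) M - wS n (t + 1) M)
          + (if (t + 1) + M ≤ n then wS (n - (t + 1) - M) (t + 1) M else 0) := by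
    intro t ht
    have htn : t + 1 ≤ n := Finset.mem_range.mp ht
    have e1 : wS n (t + 1) (M + 1)
        = wS n ((t + 1) + 1) M - wS (n - (t + 1)) ((t + 1) + 1) M := by
      rw [wS_left, if_pos htn]
    have e2 : wS n (t + 1) (M + 1)
        = wS n (t + 1) M - (if (t + 1) + M ≤ n then wS (n - ((t + 1) + M)) (t + 1) M else 0) := by
      rw [wS_succ]
    have e3 : (if (t + 1) + M ≤ n then wS (n - ((t + 1) + M)) (t + 1) M else 0)
        = (if (t + 1) + M ≤ n then wS (n - (t + 1) - M) (t + 1) M else 0) := by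
      by_cases hc : (t + 1) + M ≤ n
      · rw [if_pos hc, if_pos hc]
        congr 1
        omega
      · rw [if_neg hc, if_neg hc]
    rw [e3] at e2
    omega
  calc AA M n
      = (∑ t ∈ range n, wS (n - (t + 1)) ((t + 1) + 1) M) + wS (n - 0) (0 + 1) M := by
        rw [AA, Finset.sum_range_succ']
    _ = (∑ t ∈ range n, (wS n ((t + 1) + 1) M - wS n (t + 1) M))
          + (∑ t ∈ range n, (if (t + 1) + M ≤ n then wS (n - (t + 1) - M) (t + 1) M else 0))
          + wS n 1 M := by
        rw [Finset.sum_congr rfl key, Finset.sum_add_distrib]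
        norm_num
    _ = (wS n (n + 1) M - wS n 1 M)
          + (∑ t ∈ range n, (if (t + 1) + M ≤ n then wS (n - (t + 1) - M) (t + 1) M else 0))
          + wS n 1 M := by
        rw [Finset.sum_range_sub (fun i => wS n (i + 1) M)]
    _ = ∑ t ∈ range n, (if (t + 1) + M ≤ n then wS (n - (t + 1) - M) (t + 1) M else 0) := by
        rw [wS_gt n (n + 1) M hn (by omega)]
        ring
    _ = if M + 1 ≤ n then AA M (n - (M + 1)) else 0 := tail_sum M n

private lemma AA_eq (M : ℕ) : ∀ n, AA M n = if (M + 1) ∣ n then 1 else 0 := by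
  intro n
  induction n using Nat.strong_induction_on with
  | _ n ih =>
    rcases Nat.eq_zero_or_pos n with rfl | hn
    · rw [if_pos (dvd_zero _)]
      simp [AA, wS_zero_left]
    · rw [AA_rec M n hn]
      by_cases h : M + 1 ≤ n
      · rw [if_pos h, ih (n - (M + 1)) (by omega)]
        by_cases hd : (M + 1) ∣ n
        · rw [if_pos ((Nat.dvd_sub hd dvd_rfl)), if_pos hd]
        · rw [if_neg (fun hdd => hd (by
              have hh : n = (n - (M + 1)) + (M + 1) := by omega
              rw [hh]
              exact Nat.dvd_add hdd dvd_rfl)), if_neg hd]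
      · rw [if_neg h, if_neg (fun hd => h (Nat.le_of_dvd hn hd))]


/-- Claim A: telescoping in the window length. -/
private lemma claimA (n m : ℕ) (hn : 1 ≤ n) :
    (∑ L ∈ range (n + 1), if m + L ≤ n then wS (n - m - L) m L else 0)
      = - wS n m (n + 1) := by
  have key : ∀ L, (if m + L ≤ n then wS (n - m - L) m L else 0)
      = wS n m L - wS n m (L + 1) := by
    intro L
    rw [wS_succ]
    by_cases h : m + L ≤ n
    · rw [if_pos h, if_pos h]
      have : n - m - L = n - (m + L) := by omega
      rw [this]
      ring
    · rw [if_neg h, if_neg h]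
      ring
  calc (∑ L ∈ range (n + 1), if m + L ≤ n then wS (n - m - L) m L else 0)
      = ∑ L ∈ range (n + 1), (wS n m L - wS n m (L + 1)) :=
        Finset.sum_congr rfl (fun L _ => key L)
    _ = wS n m 0 - wS n m (n + 1) := Finset.sum_range_sub' (fun L => wS n m L) (n + 1)
    _ = - wS n m (n + 1) := by
        rw [wS_zero, if_neg (by omega)]
        ring

/-- Claim B: for each window length `L`, the sum over starting points counts
whether `L+1` divides `n`. -/
private lemma claimB (n L : ℕ) (hn : 1 ≤ n) :
    (∑ t ∈ range n, if (t + 1) + L ≤ n then wS (n - (t + 1) - L) (t + 1) L else 0)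
      = if (L + 1) ∣ n then 1 else 0 := by
  rw [tail_sum L n]
  by_cases h : L + 1 ≤ n
  · rw [if_pos h, AA_eq]
    by_cases hd : (L + 1) ∣ n
    · rw [if_pos (Nat.dvd_sub hd dvd_rfl), if_pos hd]
    · rw [if_neg (fun hdd => hd (by
        have hh : n = (n - (L + 1)) + (L + 1) := by omega
        rw [hh]
        exact Nat.dvd_add hdd dvd_rfl)), if_neg hd]
  · rw [if_neg h, if_neg (fun hd => h (Nat.le_of_dvd hn hd))]

/-- The divisor count as a sum of divisibility indicators. -/
private lemma divisors_card_eq (n : ℕ) (hn : 1 ≤ n) :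
    ((n.divisors.card : ℤ)) = ∑ L ∈ range (n + 1), (if (L + 1) ∣ n then (1 : ℤ) else 0) := by
  have h1 : ∑ k ∈ Finset.Ico 1 (n + 2), (if k ∣ n then (1 : ℤ) else 0)
      = ∑ L ∈ range (n + 1), (if (L + 1) ∣ n then (1 : ℤ) else 0) := by
    rw [Finset.sum_Ico_eq_sum_range]
    apply Finset.sum_congr (by norm_num)
    intro L _
    rw [Nat.add_comm 1 L]
  rw [← h1, Finset.sum_Ico_succ_top (by omega), if_neg (fun hd => by
      have := Nat.le_of_dvd hn hd; omega)]
  rw [add_zero, Finset.sum_boole]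
  norm_num
  rfl

set_option maxHeartbeats 2000000

private lemma finsum_id (S : Finset ℕ) : S.sum id = S.val.sum := by
  rw [Finset.sum, Multiset.map_id]

/-- Bridge: `wS n m (n+1)` is the signed count of distinct partitions of `n`
with all parts at least `m`. -/
private lemma bridge (n m : ℕ) (hn : 1 ≤ n) (hm : 1 ≤ m) :
    wS n m (n + 1)
      = ∑ π ∈ (Nat.Partition.distincts n).filter (fun π => ∀ p ∈ π.parts, m ≤ p),
          (-1 : ℤ) ^ (Multiset.card π.parts) := by
  rw [wS, ← Finset.sum_filter]
  refine Finset.sum_bij'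
    (i := fun (S : Finset ℕ) (hS : S ∈ (Finset.Ico m (m + (n + 1))).powerset.filter
        (fun S => S.sum id = n)) =>
      (⟨S.val,
        fun {p} hp => by
          have h1 := (Finset.mem_filter.mp hS).1
          have h2 := Finset.mem_powerset.mp h1 hp
          have := (Finset.mem_Ico.mp h2).1
          omega,
        by
          have h2 := (Finset.mem_filter.mp hS).2
          rw [finsum_id] at h2
          exact h2⟩ : Nat.Partition n))
    (j := fun π (hπ : π ∈ (Nat.Partition.distincts n).filter
        (fun π => ∀ p ∈ π.parts, m ≤ p)) =>
      (⟨π.parts, by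
        have h1 := (Finset.mem_filter.mp hπ).1
        have h1' : π ∈ Finset.univ.filter (fun c : Nat.Partition n => c.parts.Nodup) := h1
        exact (Finset.mem_filter.mp h1').2⟩ : Finset ℕ))
    ?hi ?hj ?left ?right ?vals
  case hi =>
    intro S hS
    rw [Finset.mem_filter]
    constructor
    · show _ ∈ Finset.univ.filter (fun c : Nat.Partition n => c.parts.Nodup)
      rw [Finset.mem_filter]
      exact ⟨Finset.mem_univ _, S.nodup⟩
    · intro p hp
      have h1 := (Finset.mem_filter.mp hS).1
      have h2 := Finset.mem_powerset.mp h1 hp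
      exact (Finset.mem_Ico.mp h2).1
  case hj =>
    intro π hπ
    have h1 := Finset.mem_filter.mp hπ
    rw [Finset.mem_filter]
    constructor
    · rw [Finset.mem_powerset]
      intro p hp
      rw [Finset.mem_Ico]
      refine ⟨h1.2 p hp, ?_⟩
      have hle : p ≤ π.parts.sum := Multiset.le_sum_of_mem hp
      rw [π.parts_sum] at hle
      omega
    · show Finset.sum _ id = n
      rw [finsum_id]
      exact π.parts_sum
  case left => intro S hS; rfl
  case right => intro π hπ; rfl
  case vals => intro S hS; rfl

/-- The smallest part of a partition (the head of its parts sorted increasingly;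
`0` for the empty partition, which does not occur for `n ≥ 1`). -/
def Nat.Partition.minPart {n : ℕ} (π : Nat.Partition n) : ℕ :=
  (π.parts.sort (· ≤ ·)).headI

private lemma minPart_spec {n : ℕ} (π : Nat.Partition n) (h : π.parts ≠ 0) :
    π.minPart ∈ π.parts ∧ ∀ p ∈ π.parts, π.minPart ≤ p := by
  unfold Nat.Partition.minPart
  have hsort : List.Pairwise (· ≤ ·) (π.parts.sort (· ≤ ·)) := Multiset.pairwise_sort _ _
  have hcoe : ((π.parts.sort (· ≤ ·) : List ℕ) : Multiset ℕ) = π.parts :=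
    Multiset.sort_eq _ _
  cases hl : π.parts.sort (· ≤ ·) with
  | nil =>
      exfalso
      apply h
      rw [← hcoe, hl]
      rfl
  | cons a t =>
      rw [hl] at hsort hcoe
      constructor
      · show (a :: t).headI ∈ π.parts
        rw [← hcoe]
        simp
      · intro p hp
        rw [← hcoe] at hp
        simp only [Multiset.mem_coe, List.mem_cons] at hp
        show (a :: t).headI ≤ p
        rcases hp with rfl | hp
        · simp
        · simpa using (List.pairwise_cons.mp hsort).1 p hp

private lemma parts_ne_zero {n : ℕ} (π : Nat.Partition n) (hn : 0 < n) : π.parts ≠ 0 := by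
  intro h
  have := π.parts_sum
  rw [h] at this
  simp at this
  omega

private lemma count_lemma (lam n : ℕ) (h1 : 1 ≤ lam) (h2 : lam ≤ n) :
    (∑ t ∈ range n, if t + 1 ≤ lam then (1 : ℤ) else 0) = lam := by
  rw [Finset.sum_boole]
  norm_num
  have : Finset.filter (fun t => t < lam) (range n) = range lam := by
    ext t
    simp only [Finset.mem_filter, Finset.mem_range]
    omega
  rw [this, Finset.card_range]

/-- **Uchimura–Bressoud–Wang.** For every positive integer `n`,
`d(n) = ∑_π (-1)^(#π + 1) · λ(π)`, the sum ranging over partitions `π` of `n`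
into distinct parts, where `#π` is the number of parts and `λ(π)` the smallest part. -/
theorem card_divisors_eq_alternating_sum_min_parts (n : ℕ) (hn : 0 < n) :
    ((n.divisors.card : ℤ)) =
      ∑ π ∈ Nat.Partition.distincts n,
        (-1 : ℤ) ^ (Multiset.card π.parts + 1) * (π.minPart : ℤ) := by
  have hn1 : 1 ≤ n := hn
  calc ((n.divisors.card : ℤ))
      = ∑ L ∈ range (n + 1), (if (L + 1) ∣ n then (1 : ℤ) else 0) := divisors_card_eq n hn1
    _ = ∑ L ∈ range (n + 1), ∑ t ∈ range n,
          (if (t + 1) + L ≤ n then wS (n - (t + 1) - L) (t + 1) L else 0) :=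
        Finset.sum_congr rfl (fun L _ => (claimB n L hn1).symm)
    _ = ∑ t ∈ range n, ∑ L ∈ range (n + 1),
          (if (t + 1) + L ≤ n then wS (n - (t + 1) - L) (t + 1) L else 0) := Finset.sum_comm
    _ = ∑ t ∈ range n, - wS n (t + 1) (n + 1) :=
        Finset.sum_congr rfl (fun t _ => claimA n (t + 1) hn1)
    _ = ∑ t ∈ range n, ∑ π ∈ (Nat.Partition.distincts n).filter
          (fun π => ∀ p ∈ π.parts, t + 1 ≤ p), (-1 : ℤ) ^ (Multiset.card π.parts + 1) := by
        apply Finset.sum_congr rfl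
        intro t _
        rw [bridge n (t + 1) hn1 (by omega), ← Finset.sum_neg_distrib]
        apply Finset.sum_congr rfl
        intro π _
        rw [pow_succ]
        ring
    _ = ∑ t ∈ range n, ∑ π ∈ Nat.Partition.distincts n,
          (if ∀ p ∈ π.parts, t + 1 ≤ p then (-1 : ℤ) ^ (Multiset.card π.parts + 1) else 0) :=
        Finset.sum_congr rfl (fun t _ => Finset.sum_filter _ _)
    _ = ∑ π ∈ Nat.Partition.distincts n, ∑ t ∈ range n,
          (if ∀ p ∈ π.parts, t + 1 ≤ p then (-1 : ℤ) ^ (Multiset.card π.parts + 1) else 0) :=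
        Finset.sum_comm
    _ = ∑ π ∈ Nat.Partition.distincts n,
        (-1 : ℤ) ^ (Multiset.card π.parts + 1) * (π.minPart : ℤ) := by
        apply Finset.sum_congr rfl
        intro π _
        obtain ⟨hmem, hle⟩ := minPart_spec π (parts_ne_zero π hn)
        have hlam1 : 1 ≤ π.minPart := π.parts_pos hmem
        have hlam2 : π.minPart ≤ n := by
          have := Multiset.le_sum_of_mem hmem
          rw [π.parts_sum] at this
          exact this
        have hiff : ∀ t, (∀ p ∈ π.parts, t + 1 ≤ p) ↔ t + 1 ≤ π.minPart := by
          intro t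
          constructor
          · intro h; exact h _ hmem
          · intro h p hp; exact le_trans h (hle p hp)
        calc ∑ t ∈ range n,
              (if ∀ p ∈ π.parts, t + 1 ≤ p then (-1 : ℤ) ^ (Multiset.card π.parts + 1) else 0)
            = ∑ t ∈ range n, (-1 : ℤ) ^ (Multiset.card π.parts + 1)
                * (if t + 1 ≤ π.minPart then (1 : ℤ) else 0) := by
              apply Finset.sum_congr rfl
              intro t _
              rw [if_congr (hiff t) rfl rfl, mul_ite, mul_one, mul_zero]
          _ = (-1 : ℤ) ^ (Multiset.card π.parts + 1) * (π.minPart : ℤ) := by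
              rw [← Finset.mul_sum, count_lemma π.minPart n hlam1 hlam2]
end

section
/- For every positive integer n, the sum of divisors σ₁(n) of n satisfies σ₁(n) = −∑_π (−1)^{#π} ∑_{j=1}^{λ(π)} ( L(π) − λ(π) + j ), where the outer sum ranges over all partitions π of n into distinct parts, #π denotes the number of parts of π, λ(π) denotes the smallest part of π, and L(π) denotes the largest part of π. -/
/-- The largest part of a partition (`0` for the empty partition). -/
def Nat.Partition.maxPart {n : ℕ} (π : Nat.Partition n) : ℕ :=
  π.parts.sup

namespace BSaux

open Nat.Partition

/-- Signed count of subsets of `[lo, lo+len)` summing to `M`. -/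
def s (lo : ℕ) : ℕ → ℤ → ℤ
  | 0, M => if M = 0 then 1 else 0
  | (len+1), M => s lo len M - s lo len (M - (lo+len))

/-- `g c mp M` = coefficient of `q^M` in `(q;q)_c / ((q^{mp+1};q)_{c+1})` (with `m = mp+1`). -/
def g : ℕ → ℕ → ℤ → ℤ
  | c, 0, M => if 0 ≤ M ∧ ((c : ℤ)+1) ∣ M then 1 else 0
  | c, (mp+1), M => g c mp M - g (c+1) mp (M - (mp+1))

lemma s_neg (lo : ℕ) : ∀ (len : ℕ) (M : ℤ), M < 0 → s lo len M = 0 := by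
  intro len
  induction len with
  | zero => intro M hM; simp [s]; omega
  | succ n ih =>
    intro M hM
    rw [s, ih M hM, ih (M - (lo + n)) (by push_cast; omega)]
    ring

/-- base-case arithmetic: difference of shifted divisibility indicators. -/
lemma ind_diff (d : ℤ) (hd : 1 ≤ d) (M : ℤ) :
    ((if 0 ≤ M ∧ d ∣ M then (1:ℤ) else 0) - if 0 ≤ M - d ∧ d ∣ (M - d) then (1:ℤ) else 0)
      = if M = 0 then 1 else 0 := by
  have hdvd : d ∣ (M - d) ↔ d ∣ M := by
    constructor
    · intro h; have := dvd_add h (dvd_refl d); simpa using this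
    · intro h; exact dvd_sub h (dvd_refl d)
  by_cases h1 : d ∣ M
  · by_cases h2 : M = 0
    · subst h2; simp [hdvd, h1]; omega
    · rcases lt_or_gt_of_ne h2 with hlt | hgt
      · have : ¬ (0 ≤ M) := by omega
        simp only [hdvd, h1]
        rw [if_neg (by tauto), if_neg (by omega), if_neg h2]; ring
      · have hMd : d ≤ M := Int.le_of_dvd hgt h1
        simp only [hdvd, h1]
        rw [if_pos ⟨by omega, trivial⟩, if_pos ⟨by omega, trivial⟩, if_neg h2]; ring
  · simp only [hdvd]
    rw [if_neg (by tauto), if_neg (by tauto), if_neg (by rintro rfl; exact h1 (dvd_zero d))]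
    ring

/-- Key identity P1, proved by induction on `mp`. -/
lemma P1 : ∀ (mp c : ℕ) (M : ℤ),
    g (c+1) mp M - g (c+1) mp (M - ((mp:ℤ) + (c:ℤ) + 2)) =
      g c mp M - g c mp (M - ((c:ℤ)+1)) := by
  intro mp
  induction mp with
  | zero =>
    intro c M
    show (g (c+1) 0 M - g (c+1) 0 (M - ((0:ℤ) + c + 2))) = _
    simp only [g]
    push_cast
    have e1 := ind_diff ((c:ℤ)+2) (by omega) M
    have e2 := ind_diff ((c:ℤ)+1) (by omega) M
    have a1 : M - ((0:ℤ) + c + 2) = M - ((c:ℤ)+2) := by ring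
    have a2 : ((c:ℤ)+1+1) = (c:ℤ)+2 := by ring
    rw [a1, a2] at *
    -- goal: [0≤M ∧ (c+2)∣M] - [0≤M-(c+2) ∧ (c+2)∣(M-(c+2))] = [0≤M∧(c+1)∣M] - [...]
    calc _ = (if M = 0 then (1:ℤ) else 0) := by rw [← e1]
    _ = _ := by rw [← e2]
  | succ mp ih =>
    intro c M
    simp only [g]
    have h1 := ih c M
    have h2 := ih (c+1) (M - ((mp:ℤ)+1))
    push_cast at *
    ring_nf at *
    linarith

lemma L0 : ∀ (mp : ℕ) (M : ℤ),
    g 0 mp M - g 0 mp (M - ((mp:ℤ)+1)) = if M = 0 then 1 else 0 := by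
  intro mp
  induction mp with
  | zero =>
    intro M
    simp only [g]
    have := ind_diff 1 le_rfl M
    push_cast at *
    convert this using 3 <;> norm_num
  | succ mp ih =>
    intro M
    simp only [g]
    have h1 := ih M
    have h2 := ih (M - ((mp:ℤ)+2))
    have h3 := P1 mp 0 (M - ((mp:ℤ)+1))
    push_cast at *
    ring_nf at *
    -- want: derived from h1 h2 h3; but careful: we need hM : shows goal equals [M=0]
    linarith

lemma g_neg : ∀ (mp c : ℕ) (M : ℤ), M < 0 → g c mp M = 0 := by
  intro mp
  induction mp with
  | zero => intro c M hM; simp only [g]; rw [if_neg (by omega)]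
  | succ mp ih =>
    intro c M hM
    simp only [g]
    rw [ih c M hM, ih (c+1) (M - ((mp:ℤ)+1)) (by push_cast; omega)]
    ring

/-- `g 0 mp` is the indicator of divisibility by `mp+1` (on nonnegatives). -/
lemma g_zero_eq (mp : ℕ) : ∀ (k : ℕ),
    g 0 mp (k : ℤ) = if ((mp:ℕ)+1) ∣ k then 1 else 0 := by
  intro k
  induction k using Nat.strong_induction_on with
  | _ k ih =>
    have h := L0 mp (k : ℤ)
    by_cases hk : k = 0
    · subst hk
      rw [show ((0:ℕ):ℤ) = (0:ℤ) by norm_num] at h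
      rw [g_neg mp 0 ((0:ℤ) - ((mp:ℤ)+1)) (by omega)] at h
      simp at h ⊢
      omega
    · rw [if_neg (by omega)] at h
      by_cases hbig : (mp:ℕ)+1 ≤ k
      · have e : (k : ℤ) - ((mp:ℤ)+1) = ((k - (mp+1) : ℕ) : ℤ) := by push_cast; omega
        rw [e] at h
        rw [ih (k - (mp+1)) (by omega)] at h
        have hdvd : ((mp:ℕ)+1) ∣ (k - (mp+1)) ↔ ((mp:ℕ)+1) ∣ k := by
          constructor
          · intro hd; have := Nat.dvd_add hd (dvd_refl (mp+1)); rwa [Nat.sub_add_cancel hbig] at this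
          · intro hd; exact Nat.dvd_sub hd (dvd_refl (mp+1))
        rw [show (if ((mp:ℕ)+1) ∣ (k - (mp+1)) then (1:ℤ) else 0) = if ((mp:ℕ)+1) ∣ k then 1 else 0 by
          simp only [hdvd]] at h
        omega
      · rw [g_neg mp 0 ((k:ℤ) - ((mp:ℤ)+1)) (by push_cast; omega)] at h
        rw [if_neg (by intro hd; have := Nat.le_of_dvd (by omega) hd; omega)]
        omega

/-- The main evaluation: the `a`-indexed sum of `s` equals `g`. -/
lemma sum_s_eq_g : ∀ (mp c : ℕ) (M : ℤ) (R : ℕ), (M < (R:ℤ)) →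
    (∑ a ∈ Finset.range R, s (a+1) mp (M - ((c:ℤ)+1) * a)) = g c mp M := by
  intro mp
  induction mp with
  | zero =>
    intro c M R hR
    simp only [s, g]
    by_cases h : 0 ≤ M ∧ ((c:ℤ)+1) ∣ M
    · obtain ⟨hM0, t, ht⟩ := h
      have ht0 : 0 ≤ t := by nlinarith [ht, hM0]
      have h2 : ((t.toNat:ℕ):ℤ) = t := Int.toNat_of_nonneg ht0
      -- the unique witness is a = t.toNat
      rw [Finset.sum_eq_single_of_mem t.toNat]
      · rw [if_pos (by rw [h2]; omega), if_pos ⟨hM0, ⟨t, ht⟩⟩]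
      · have h1 : t < (R:ℤ) := by nlinarith
        refine Finset.mem_range.mpr ?_
        omega
      · intro b _ hb
        rw [if_neg]
        intro hMb
        apply hb
        have : (b:ℤ) = t := by
          have hc1 : (0:ℤ) < (c:ℤ)+1 := by omega
          have : ((c:ℤ)+1) * b = ((c:ℤ)+1) * t := by omega
          exact_mod_cast mul_left_cancel₀ (by omega) this
        omega
    · rw [if_neg h]
      apply Finset.sum_eq_zero
      intro a _
      rw [if_neg]
      intro hMa
      apply h
      refine ⟨?_, ⟨a, by omega⟩⟩
      have : (0:ℤ) ≤ ((c:ℤ)+1) * a := by positivity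
      omega
  | succ mp ih =>
    intro c M R hR
    simp only [s, g]
    rw [Finset.sum_sub_distrib]
    congr 1
    · exact ih c M R hR
    · have := ih (c+1) (M - ((mp:ℤ)+1)) R (by omega)
      rw [← this]
      apply Finset.sum_congr rfl
      intro a _
      congr 1
      push_cast
      ring


/-- signed subset-sum over a finset with an extra element. -/
lemma signed_insert (a : ℕ) (t : Finset ℕ) (ha : a ∉ t) (M : ℤ) :
    ∑ B ∈ (insert a t).powerset.filter (fun B => ((B.sum id : ℕ) : ℤ) = M), (-1:ℤ)^B.card
      = (∑ B ∈ t.powerset.filter (fun B => ((B.sum id : ℕ) : ℤ) = M), (-1:ℤ)^B.card)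
        - ∑ B ∈ t.powerset.filter (fun B => ((B.sum id : ℕ) : ℤ) = M - a), (-1:ℤ)^B.card := by
  classical
  have hdisj : Disjoint ((t.powerset).filter (fun B => ((B.sum id : ℕ) : ℤ) = M))
      (((t.powerset.image (insert a))).filter (fun B => ((B.sum id : ℕ) : ℤ) = M)) := by
    rw [Finset.disjoint_left]
    intro B hB1 hB2
    simp only [Finset.mem_filter, Finset.mem_powerset, Finset.mem_image] at hB1 hB2
    obtain ⟨C, _, rfl⟩ := hB2.1
    exact ha (hB1.1 (Finset.mem_insert_self a C))
  rw [Finset.powerset_insert, Finset.filter_union, Finset.sum_union hdisj]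
  have h2 : (∑ B ∈ ((t.powerset.image (insert a))).filter
        (fun B => ((B.sum id : ℕ) : ℤ) = M), (-1:ℤ)^B.card)
      = - ∑ B ∈ t.powerset.filter (fun B => ((B.sum id : ℕ) : ℤ) = M - a), (-1:ℤ)^B.card := by
    rw [Finset.filter_image, Finset.sum_image]
    · have hfe : t.powerset.filter (fun B => (((insert a B).sum id : ℕ) : ℤ) = M)
          = t.powerset.filter (fun B => ((B.sum id : ℕ) : ℤ) = M - a) := by
        apply Finset.filter_congr
        intro B hB
        simp only [Finset.mem_powerset] at hB
        rw [Finset.sum_insert (fun hmem => ha (hB hmem))]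
        simp only [id, eq_iff_iff]
        push_cast
        constructor <;> intro h <;> omega
      rw [hfe, ← Finset.sum_neg_distrib]
      apply Finset.sum_congr rfl
      intro B hB
      simp only [hfe, Finset.mem_filter, Finset.mem_powerset] at hB
      rw [Finset.card_insert_of_notMem (fun hmem => ha (hB.1 hmem))]
      ring
    · intro B1 h1 B2 h2 he
      simp only [Finset.mem_coe, Finset.mem_filter, Finset.mem_powerset] at h1 h2
      have e1 : B1 = (insert a B1).erase a := (Finset.erase_insert (fun h => ha (h1.1 h))).symm
      rw [e1, he, Finset.erase_insert (fun h => ha (h2.1 h))]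
  rw [h2]
  ring

lemma powerset_signed (lo : ℕ) : ∀ (len : ℕ) (M : ℤ),
    ∑ B ∈ (Finset.Ico lo (lo+len)).powerset.filter (fun B => ((B.sum id : ℕ) : ℤ) = M), (-1:ℤ)^B.card
      = s lo len M := by
  intro len
  induction len with
  | zero =>
    intro M
    simp only [Nat.add_zero, Finset.Ico_self, Finset.powerset_empty, s]
    by_cases h : M = 0
    · subst h; rw [Finset.filter_singleton, if_pos (by simp)]; simp
    · rw [Finset.filter_singleton, if_neg (by simpa using (Ne.symm h)), if_neg h]; simp
  | succ len ih =>
    intro M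
    have hins : Finset.Ico lo (lo+(len+1)) = insert (lo+len) (Finset.Ico lo (lo+len)) := by
      ext x; simp only [Finset.mem_Ico, Finset.mem_insert]; omega
    rw [hins, signed_insert _ _ (by simp), ih, ih, s]
    push_cast
    ring_nf


variable {n : ℕ} (π : Nat.Partition n)

lemma le_maxPart {x : ℕ} (hx : x ∈ π.parts) : x ≤ π.maxPart :=
  Multiset.le_sup hx

lemma maxPart_mem (hne : π.parts ≠ 0) : π.maxPart ∈ π.parts := by
  have hF : π.parts.toFinset.Nonempty := by
    obtain ⟨x, hx⟩ := Multiset.exists_mem_of_ne_zero hne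
    exact ⟨x, Multiset.mem_toFinset.mpr hx⟩
  obtain ⟨b, hb, he⟩ := Finset.exists_mem_eq_sup π.parts.toFinset hF id
  have : π.parts.toFinset.sup id = π.parts.sup := by
    rw [Finset.sup_def, Multiset.map_id]
    exact Multiset.sup_dedup _
  rw [Nat.Partition.maxPart, ← this, he]
  exact Multiset.mem_toFinset.mp hb

lemma minPart_spec (hne : π.parts ≠ 0) :
    π.minPart ∈ π.parts ∧ ∀ x ∈ π.parts, π.minPart ≤ x := by
  have hl : ((π.parts.sort (· ≤ ·)) : Multiset ℕ) = π.parts := Multiset.sort_eq _ _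
  have hnil : π.parts.sort (· ≤ ·) ≠ [] := by
    intro h; apply hne; rw [← hl, h]; rfl
  have hsort : List.Pairwise (· ≤ ·) (π.parts.sort (· ≤ ·)) := Multiset.pairwise_sort _ _
  rcases he : π.parts.sort (· ≤ ·) with _ | ⟨h, t⟩
  · exact absurd he hnil
  · rw [he] at hl hsort
    have hmp : π.minPart = h := by rw [Nat.Partition.minPart, he]; rfl
    constructor
    · rw [hmp, ← hl]; exact Multiset.mem_coe.mpr List.mem_cons_self
    · intro x hx
      rw [← hl] at hx
      rw [hmp]
      rcases List.mem_cons.mp (Multiset.mem_coe.mp hx) with h1 | h2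
      · omega
      · exact List.rel_of_pairwise_cons hsort h2

lemma maxPart_le_n : π.maxPart ≤ n := by
  by_cases hne : π.parts = 0
  · rw [Nat.Partition.maxPart, hne]
    simp
  · have := maxPart_mem π hne
    calc π.maxPart ≤ π.parts.sum := Multiset.single_le_sum (fun x _ => Nat.zero_le x) _ this
    _ = n := π.parts_sum

lemma parts_ne_zero (hn : 0 < n) : π.parts ≠ 0 := by
  intro h
  have := π.parts_sum
  rw [h] at this
  simp at this
  omega


/-- total inverse map -/
def jmap (N m : ℕ) (x : (_ : ℕ) × Finset ℕ) : Nat.Partition N :=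
  if h : ((insert (x.1+m) x.2).val.sum = N) then
    Nat.Partition.ofSums N (insert (x.1+m) x.2).val h else default

lemma cnt_eq (N m : ℕ) (hN : 0 < N) (hm : 0 < m) :
    (∑ π ∈ (Nat.Partition.distincts N).filter
        (fun π => π.maxPart - π.minPart < m ∧ m ≤ π.maxPart),
      (-1:ℤ)^(Multiset.card π.parts))
    = ∑ x ∈ (Finset.range N).sigma
        (fun a => (Finset.Ico (a+1) (a+m)).powerset.filter (fun B => a + m + B.sum id = N)),
        (-1:ℤ)^(x.2.card + 1) := by
  classical
  have memfacts : ∀ π ∈ (Nat.Partition.distincts N).filter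
      (fun π => π.maxPart - π.minPart < m ∧ m ≤ π.maxPart),
      π.parts.Nodup ∧ π.maxPart - π.minPart < m ∧ m ≤ π.maxPart := by
    intro π hπ
    rw [Finset.mem_filter] at hπ
    refine ⟨?_, hπ.2⟩
    have := hπ.1
    rw [Nat.Partition.distincts, Finset.mem_filter] at this
    exact this.2
  refine Finset.sum_bij' (i := fun π _ => ⟨π.maxPart - m, π.parts.toFinset.erase π.maxPart⟩)
    (j := fun x _ => jmap N m x) ?_ ?_ ?_ ?_ ?_
  -- hi : i maps into the sigma finset
  · intro π hπ
    obtain ⟨hnodup, hlt, hle⟩ := memfacts π hπ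
    have hne := parts_ne_zero π hN
    have hmaxmem := maxPart_mem π hne
    have hminmax := (minPart_spec π hne).2 _ hmaxmem
    have hmaxN := maxPart_le_n π
    have hval : π.parts.toFinset.val = π.parts := by
      rw [Multiset.toFinset_val, Multiset.dedup_eq_self.mpr hnodup]
    have hsumF : π.parts.toFinset.sum id = N := by
      rw [← Finset.sum_val, hval, π.parts_sum]
    have hmemF : π.maxPart ∈ π.parts.toFinset := Multiset.mem_toFinset.mpr hmaxmem
    have hsum : π.maxPart + (π.parts.toFinset.erase π.maxPart).sum id = N := by
      have h : π.maxPart + (π.parts.toFinset.erase π.maxPart).sum id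
          = π.parts.toFinset.sum id := Finset.add_sum_erase π.parts.toFinset id hmemF
      omega
    rw [Finset.mem_sigma]
    constructor
    · rw [Finset.mem_range]
      show π.maxPart - m < N
      omega
    · rw [Finset.mem_filter, Finset.mem_powerset]
      constructor
      · show π.parts.toFinset.erase π.maxPart ⊆
          Finset.Ico ((π.maxPart - m)+1) ((π.maxPart - m)+m)
        intro x hx
        rw [Finset.mem_erase, Multiset.mem_toFinset] at hx
        have hxle := le_maxPart π hx.2
        have hxge := (minPart_spec π hne).2 _ hx.2
        rw [Finset.mem_Ico]
        omega
      · show (π.maxPart - m) + m + (π.parts.toFinset.erase π.maxPart).sum id = N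
        omega
  -- hj : j maps into the filter finset
  · intro x hx
    rw [Finset.mem_sigma, Finset.mem_filter, Finset.mem_powerset] at hx
    obtain ⟨hxa, hxB, hxsum⟩ := hx
    have hnotmem : x.1 + m ∉ x.2 := by
      intro h; have := hxB h; rw [Finset.mem_Ico] at this; omega
    have hvalsum : ((insert (x.1+m) x.2).val.sum = N) := by
      have h1 : (insert (x.1+m) x.2).sum id = x.1 + m + x.2.sum id := by
        rw [Finset.sum_insert hnotmem]; rfl
      have h2 : (insert (x.1+m) x.2).val.sum = (insert (x.1+m) x.2).sum id :=
        Finset.sum_val _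
      omega
    have hjx : jmap N m x = Nat.Partition.ofSums N (insert (x.1+m) x.2).val hvalsum := by
      rw [jmap, dif_pos hvalsum]
    have hparts : (jmap N m x).parts = (insert (x.1+m) x.2).val := by
      rw [hjx]
      show ((insert (x.1+m) x.2).val.filter (· ≠ 0)) = _
      rw [Multiset.filter_eq_self]
      intro y hy
      rcases Finset.mem_insert.mp hy with h | h
      · omega
      · have := hxB h; rw [Finset.mem_Ico] at this; omega
    -- min and max of jmap
    have hmemall : ∀ y ∈ (jmap N m x).parts, x.1 + 1 ≤ y ∧ y ≤ x.1 + m := by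
      intro y hy
      rw [hparts] at hy
      rcases Finset.mem_insert.mp hy with h | h
      · omega
      · have := hxB h; rw [Finset.mem_Ico] at this; omega
    have htopmem : x.1 + m ∈ (jmap N m x).parts := by
      rw [hparts]; exact Finset.mem_insert_self _ _
    have hmax : (jmap N m x).maxPart = x.1 + m := by
      apply le_antisymm
      · apply Multiset.sup_le.mpr
        intro y hy; exact (hmemall y hy).2
      · exact le_maxPart _ htopmem
    have hne : (jmap N m x).parts ≠ 0 := parts_ne_zero _ hN
    have hminmem := (minPart_spec (jmap N m x) hne).1
    have hminge := (hmemall _ hminmem).1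
    rw [Finset.mem_filter]
    refine ⟨?_, ?_, ?_⟩
    · rw [Nat.Partition.distincts, Finset.mem_filter]
      exact ⟨Finset.mem_univ _, by rw [hparts]; exact (insert (x.1+m) x.2).nodup⟩
    · omega
    · omega
  -- left_inv : j (i π) = π
  · intro π hπ
    obtain ⟨hnodup, hlt, hle⟩ := memfacts π hπ
    have hne := parts_ne_zero π hN
    have hmaxmem := maxPart_mem π hne
    have hval : π.parts.toFinset.val = π.parts := by
      rw [Multiset.toFinset_val, Multiset.dedup_eq_self.mpr hnodup]
    have hmemF : π.maxPart ∈ π.parts.toFinset := Multiset.mem_toFinset.mpr hmaxmem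
    have hins : insert ((π.maxPart - m) + m) (π.parts.toFinset.erase π.maxPart) = π.parts.toFinset := by
      rw [show (π.maxPart - m) + m = π.maxPart from by omega]
      exact Finset.insert_erase hmemF
    apply Nat.Partition.ext
    have hvalsum : ((insert ((π.maxPart - m) + m) (π.parts.toFinset.erase π.maxPart)).val.sum = N) := by
      rw [hins, hval, π.parts_sum]
    rw [show jmap N m ⟨π.maxPart - m, π.parts.toFinset.erase π.maxPart⟩
        = Nat.Partition.ofSums N _ hvalsum from by rw [jmap, dif_pos hvalsum]]
    show ((insert ((π.maxPart - m) + m) (π.parts.toFinset.erase π.maxPart)).val.filter (· ≠ 0)) = π.parts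
    rw [hins, hval, Multiset.filter_eq_self]
    intro y hy
    exact (π.parts_pos hy).ne'
  -- right_inv : i (j x) = x
  · intro x hx
    rw [Finset.mem_sigma, Finset.mem_filter, Finset.mem_powerset] at hx
    obtain ⟨hxa, hxB, hxsum⟩ := hx
    have hnotmem : x.1 + m ∉ x.2 := by
      intro h; have := hxB h; rw [Finset.mem_Ico] at this; omega
    have hvalsum : ((insert (x.1+m) x.2).val.sum = N) := by
      have h1 : (insert (x.1+m) x.2).sum id = x.1 + m + x.2.sum id := by
        rw [Finset.sum_insert hnotmem]; rfl
      have h2 : (insert (x.1+m) x.2).val.sum = (insert (x.1+m) x.2).sum id :=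
        Finset.sum_val _
      omega
    have hparts : (jmap N m x).parts = (insert (x.1+m) x.2).val := by
      rw [show jmap N m x = Nat.Partition.ofSums N _ hvalsum from by rw [jmap, dif_pos hvalsum]]
      show ((insert (x.1+m) x.2).val.filter (· ≠ 0)) = _
      rw [Multiset.filter_eq_self]
      intro y hy
      rcases Finset.mem_insert.mp hy with h | h
      · omega
      · have := hxB h; rw [Finset.mem_Ico] at this; omega
    have hmax : (jmap N m x).maxPart = x.1 + m := by
      apply le_antisymm
      · apply Multiset.sup_le.mpr
        intro y hy
        rw [hparts] at hy
        rcases Finset.mem_insert.mp hy with h | h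
        · omega
        · have := hxB h; rw [Finset.mem_Ico] at this; omega
      · apply le_maxPart
        rw [hparts]; exact Finset.mem_insert_self _ _
    have htoF : (jmap N m x).parts.toFinset = insert (x.1+m) x.2 := by
      rw [hparts, Finset.val_toFinset]
    refine Sigma.ext ?_ ?_
    · show (jmap N m x).maxPart - m = x.1
      rw [hmax]; omega
    · show HEq ((jmap N m x).parts.toFinset.erase (jmap N m x).maxPart) x.2
      rw [htoF, hmax, Finset.erase_insert hnotmem]
  -- values agree
  · intro π hπ
    dsimp only
    obtain ⟨hnodup, hlt, hle⟩ := memfacts π hπ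
    have hne := parts_ne_zero π hN
    have hmaxmem := maxPart_mem π hne
    have hmemF : π.maxPart ∈ π.parts.toFinset := Multiset.mem_toFinset.mpr hmaxmem
    have hcard : Multiset.card π.parts = (π.parts.toFinset.erase π.maxPart).card + 1 := by
      rw [Finset.card_erase_of_mem hmemF]
      have h1 : π.parts.toFinset.card = Multiset.card π.parts :=
        Multiset.toFinset_card_of_nodup hnodup
      have h2 : 0 < π.parts.toFinset.card := Finset.card_pos.mpr ⟨_, hmemF⟩
      omega
    rw [hcard]


/-- inner sum rewrite -/
lemma inner_rewrite (N lam L : ℕ) (h1 : 1 ≤ lam) (h2 : lam ≤ L) (h3 : L ≤ N) :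
    (∑ j ∈ Finset.Icc 1 lam, ((L : ℤ) - (lam : ℤ) + (j : ℤ)))
      = ∑ m ∈ Finset.Icc 1 N, (if L - lam < m ∧ m ≤ L then (m:ℤ) else 0) := by
  have hfil : (Finset.Icc 1 N).filter (fun m => L - lam < m ∧ m ≤ L)
      = Finset.Icc ((L - lam) + 1) L := by
    ext x
    simp only [Finset.mem_filter, Finset.mem_Icc]
    omega
  rw [← Finset.sum_filter, hfil]
  have hmap : (Finset.Icc 1 lam).map (addLeftEmbedding (L - lam))
      = Finset.Icc ((L-lam) + 1) L := by
    rw [Finset.map_add_left_Icc]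
    congr 1
    omega
  rw [← hmap, Finset.sum_map]
  apply Finset.sum_congr rfl
  intro j hj
  rw [Finset.mem_Icc] at hj
  have : (addLeftEmbedding (L - lam)) j = (L - lam) + j := rfl
  rw [this]
  push_cast
  omega



/-- The refined Bressoud–Subbarao identity: fixed-`m` signed count. -/
lemma refined (N m : ℕ) (hN : 0 < N) (hm : 0 < m) :
    (∑ π ∈ (Nat.Partition.distincts N).filter
        (fun π => π.maxPart - π.minPart < m ∧ m ≤ π.maxPart),
      (-1:ℤ)^(Multiset.card π.parts))
    = - (if m ∣ N then 1 else 0) := by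
  rw [cnt_eq N m hN hm, Finset.sum_sigma]
  have step1 : ∀ a ∈ Finset.range N,
      (∑ B ∈ (Finset.Ico (a+1) (a+m)).powerset.filter (fun B => a + m + B.sum id = N),
        (-1:ℤ)^(B.card + 1))
      = - s (a+1) (m-1) (((N:ℤ) - m) - (0+1) * a) := by
    intro a _
    have hIco : Finset.Ico (a+1) (a+m) = Finset.Ico (a+1) ((a+1)+(m-1)) := by
      congr 1
      omega
    have hfil : (Finset.Ico (a+1) (a+m)).powerset.filter (fun B => a + m + B.sum id = N)
        = (Finset.Ico (a+1) ((a+1)+(m-1))).powerset.filter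
            (fun B => ((B.sum id : ℕ) : ℤ) = ((N:ℤ) - m) - (0+1) * a) := by
      rw [← hIco]
      apply Finset.filter_congr
      intro B _
      constructor <;> intro h <;> omega
    rw [hfil, ← powerset_signed (a+1) (m-1) (((N:ℤ) - m) - (0+1) * a)]
    rw [← Finset.sum_neg_distrib]
    apply Finset.sum_congr rfl
    intro B _
    ring
  rw [Finset.sum_congr rfl step1, Finset.sum_neg_distrib]
  have step2 : (∑ a ∈ Finset.range N, s (a+1) (m-1) (((N:ℤ) - m) - (0+1) * a))
      = g 0 (m-1) ((N:ℤ) - m) := by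
    have := sum_s_eq_g (m-1) 0 ((N:ℤ) - m) N (by push_cast; omega)
    rw [← this]
    apply Finset.sum_congr rfl
    intro a _
    congr 1 <;> push_cast <;> ring
  rw [step2]
  congr 1
  by_cases hmn : m ≤ N
  · have he : (N:ℤ) - m = ((N - m : ℕ) : ℤ) := by push_cast; omega
    rw [he, g_zero_eq (m-1) (N - m)]
    have hdvd : ((m-1) + 1) ∣ (N - m) ↔ m ∣ N := by
      rw [show (m-1)+1 = m from by omega]
      constructor
      · intro hd
        have := Nat.dvd_add hd (dvd_refl m)
        rwa [Nat.sub_add_cancel hmn] at this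
      · intro hd
        exact Nat.dvd_sub hd (dvd_refl m)
    simp only [hdvd]
  · rw [g_neg (m-1) 0 ((N:ℤ) - m) (by push_cast; omega)]
    rw [if_neg (fun hd => by have := Nat.le_of_dvd hN hd; omega)]

end BSaux

/-- **Bressoud–Subbarao, first power.** -/
theorem sigma_one_eq_neg_alternating_sum (n : ℕ) (hn : 0 < n) :
    (∑ d ∈ n.divisors, (d : ℤ)) =
      -∑ π ∈ Nat.Partition.distincts n,
        (-1 : ℤ) ^ (Multiset.card π.parts) *
          ∑ j ∈ Finset.Icc 1 π.minPart,
            ((π.maxPart : ℤ) - (π.minPart : ℤ) + (j : ℤ)) := by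
  classical
  have hinner : ∀ π ∈ Nat.Partition.distincts n,
      (-1 : ℤ) ^ (Multiset.card π.parts) *
          (∑ j ∈ Finset.Icc 1 π.minPart, ((π.maxPart : ℤ) - (π.minPart : ℤ) + (j : ℤ)))
      = ∑ m ∈ Finset.Icc 1 n,
          (if π.maxPart - π.minPart < m ∧ m ≤ π.maxPart then
            (-1 : ℤ) ^ (Multiset.card π.parts) * m else 0) := by
    intro π _
    have hne := BSaux.parts_ne_zero π hn
    have hminmem := (BSaux.minPart_spec π hne).1
    have h1 : 1 ≤ π.minPart := π.parts_pos hminmem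
    have h2 : π.minPart ≤ π.maxPart := (BSaux.minPart_spec π hne).2 _ (BSaux.maxPart_mem π hne)
    have h3 : π.maxPart ≤ n := BSaux.maxPart_le_n π
    rw [BSaux.inner_rewrite n π.minPart π.maxPart h1 h2 h3, Finset.mul_sum]
    apply Finset.sum_congr rfl
    intro m _
    rw [mul_ite, mul_zero]
  rw [Finset.sum_congr rfl hinner, Finset.sum_comm]
  have hswap : ∀ m ∈ Finset.Icc 1 n,
      (∑ π ∈ Nat.Partition.distincts n,
        (if π.maxPart - π.minPart < m ∧ m ≤ π.maxPart then
          (-1 : ℤ) ^ (Multiset.card π.parts) * m else 0))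
      = - (if m ∣ n then (m : ℤ) else 0) := by
    intro m hm
    rw [Finset.mem_Icc] at hm
    rw [Finset.sum_ite, Finset.sum_const_zero, add_zero, ← Finset.sum_mul]
    rw [BSaux.refined n m hn (by omega)]
    by_cases hd : m ∣ n
    · rw [if_pos hd, if_pos hd]; ring
    · rw [if_neg hd, if_neg hd]; ring
  rw [Finset.sum_congr rfl hswap, Finset.sum_neg_distrib, neg_neg]
  rw [Nat.divisors]
  rw [show Finset.Icc 1 n = Finset.Ico 1 (n+1) from (Finset.Ico_add_one_right_eq_Icc 1 n)]
  rw [Finset.sum_filter]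
end

section
/- Let t(n) = n(n+1)/2 denote the n-th triangular number. For integers i > j ≥ 1 with i = j + 1, define the t(i) × t(j) integer matrix A_{i,j} by A_{i,j}[k,l] = −1 if k = l, A_{i,j}[k,l] = 1 if k − i = l, and A_{i,j}[k,l] = 0 otherwise (indices 1 ≤ k ≤ t(i), 1 ≤ l ≤ t(j)). For i ≥ 1 define the integer vector I_i of length t(i) by I_i[k] = 1 if k = t(i−1)+1 and I_i[k] = 0 otherwise. Define vectors E_n of length t(n) recursively by E_1 = I_1 and E_n = A_{n,n−1} E_{n−1} + n · I_n for n ≥ 2 (equivalently, E_n = ∑_{m=1}^{n} m · A_{n,n−1} A_{n−1,n−2} ⋯ A_{m+1,m} I_m). Then for every positive integer n, the entry of E_n in position t(n−1)+1 equals d(n), the number of positive divisors of n. -/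
/-- The `n`-th triangular number `t(n) = n(n+1)/2`. -/
def tri (n : ℕ) : ℕ := n * (n + 1) / 2

/-- The `t(i) × t(j)` integer matrix `A_{i,j}` (indices written `0`-based):
`A[k,l] = -1` if `k = l`, `A[k,l] = 1` if `k - i = l` (i.e. `k = l + i`), else `0`. -/
def Amat (i j : ℕ) : Matrix (Fin (tri i)) (Fin (tri j)) ℤ := fun k l =>
  if (k : ℕ) = (l : ℕ) then -1 else if (k : ℕ) = (l : ℕ) + i then 1 else 0

/-- The vector `I_i` of length `t(i)`: its entry in (1-based) position `t(i-1)+1`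
(i.e. `0`-based index `t(i-1)`) is `1`, and all other entries are `0`. -/
def Ivec (i : ℕ) : Fin (tri i) → ℤ := fun k =>
  if (k : ℕ) = tri (i - 1) then 1 else 0

/-- The vectors `E_n` of length `t(n)`, defined by `E_1 = I_1` and
`E_n = A_{n,n-1} E_{n-1} + n · I_n` for `n ≥ 2`. -/
def Evec : (n : ℕ) → Fin (tri n) → ℤ
  | 0 => fun _ => 0
  | 1 => Ivec 1
  | (n + 2) => (Amat (n + 2) (n + 1)).mulVec (Evec (n + 1)) + ((n + 2 : ℕ) : ℤ) • Ivec (n + 2)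

section EvecProofAux

open Polynomial Finset

noncomputable def Wp : ℕ → Polynomial ℤ
  | 0 => 1
  | (m+1) => (1 - X^(m+1)) * Wp m + 1

noncomputable def Hp : ℕ → Polynomial (Polynomial ℤ)
  | 0 => 1
  | (N+1) => Hp N * C (1 - X^(N+1)) + X^(N+1)

lemma Hp_FE (N : ℕ) : (Hp N).comp (C X * X) = (1 - X) * Hp N + X^(N+1) := by
  induction N with
  | zero => simp [Hp]
  | succ N ih =>
      have hc : (C (1 - X^(N+1)) : Polynomial (Polynomial ℤ)) = 1 - C (X^(N+1)) := by
        simp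
      show (Hp N * C (1 - X^(N+1)) + X^(N+1)).comp (C X * X)
          = (1 - X) * (Hp N * C (1 - X^(N+1)) + X^(N+1)) + X^(N+2)
      rw [add_comp, mul_comp, C_comp, ih, X_pow_comp, mul_pow, ← C_pow, hc]
      ring

lemma Hp_eval_one (N : ℕ) : (Hp N).eval 1 = Wp N := by
  induction N with
  | zero => simp [Hp, Wp]
  | succ N ih => simp [Hp, Wp, ih]; ring

/-- `e N k = H_N'(q^k)`. -/
noncomputable def ee (N k : ℕ) : Polynomial ℤ := (derivative (Hp N)).eval (X^k)
/-- `h N k = H_N(q^k)`. -/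
noncomputable def hh (N k : ℕ) : Polynomial ℤ := (Hp N).eval (X^k)

lemma Hp_deriv_FE (N : ℕ) :
    C X * (derivative (Hp N)).comp (C X * X)
      = (1 - X) * derivative (Hp N) - Hp N + C ((N+1 : ℕ) : Polynomial ℤ) * X^N := by
  have h := congrArg derivative (Hp_FE N)
  rw [derivative_comp] at h
  have h2 : derivative (C (X:Polynomial ℤ) * X) = C X := by
    rw [derivative_C_mul, derivative_X, mul_one]
  rw [h2] at h
  simp only [derivative_add, derivative_mul, derivative_X_pow, derivative_sub,
    derivative_one, derivative_X, Nat.add_sub_cancel] at h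
  rw [h]; push_cast; ring

lemma hh_one (N : ℕ) : hh N 1 = 1 := by
  have h := congrArg (eval (1 : Polynomial ℤ)) (Hp_FE N)
  rw [eval_comp] at h
  simp at h
  simpa [hh] using h

lemma hh_succ (N k : ℕ) : hh N (k+1) = (1 - X^k) * hh N k + X^(k*(N+1)) := by
  have h := congrArg (eval ((X:Polynomial ℤ)^k)) (Hp_FE N)
  rw [eval_comp] at h
  simp only [eval_mul, eval_add, eval_sub, eval_one, eval_pow, eval_X, eval_C] at h
  rw [show (X:Polynomial ℤ) * X^k = X^(k+1) by ring] at h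
  simpa [hh, pow_mul, mul_comm] using h

lemma ee_identity (N k : ℕ) :
    X * ee N (k+1) = (1 - X^k) * ee N k - hh N k + ((N+1 : ℕ) : Polynomial ℤ) * X^(k*N) := by
  have h := congrArg (eval ((X:Polynomial ℤ)^k)) (Hp_deriv_FE N)
  rw [eval_mul, eval_C, eval_comp] at h
  simp only [eval_mul, eval_add, eval_sub, eval_one, eval_pow, eval_X, eval_C] at h
  rw [show (X:Polynomial ℤ) * X^k = X^(k+1) by ring] at h
  rw [show ((X:Polynomial ℤ)^k)^N = X^(k*N) by rw [← pow_mul]] at h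
  simpa [ee, hh] using h

lemma W_eq (N : ℕ) : Wp N = ((N+1 : ℕ) : Polynomial ℤ) - X * ee N 1 := by
  have h := congrArg (eval (1 : Polynomial ℤ)) (Hp_deriv_FE N)
  rw [eval_mul, eval_C, eval_comp] at h
  simp only [eval_mul, eval_add, eval_sub, eval_one, eval_pow, eval_X, eval_C,
    mul_one, one_pow] at h
  rw [Hp_eval_one] at h
  have hX : (X:Polynomial ℤ) * ee N 1 = X * eval X (derivative (Hp N)) := by
    simp [ee, pow_one]
  rw [hX, h]; push_cast; ring

/-! ### Congruence mod `X^(N+1)` -/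

def Cg (N : ℕ) (a b : Polynomial ℤ) : Prop := ∀ r ≤ N, a.coeff r = b.coeff r

lemma Cg.refl (N : ℕ) (a : Polynomial ℤ) : Cg N a a := fun _ _ => rfl
lemma Cg.symm' {N a b} (h : Cg N a b) : Cg N b a := fun r hr => (h r hr).symm
lemma Cg.trans' {N a b c} (h1 : Cg N a b) (h2 : Cg N b c) : Cg N a c :=
  fun r hr => (h1 r hr).trans (h2 r hr)
lemma Cg.add' {N a b c d} (h1 : Cg N a b) (h2 : Cg N c d) : Cg N (a + c) (b + d) := by
  intro r hr; simp [Polynomial.coeff_add, h1 r hr, h2 r hr]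

lemma Cg.mul_left {N : ℕ} (c : Polynomial ℤ) {a b} (h : Cg N a b) : Cg N (c * a) (c * b) := by
  intro r hr
  rw [Polynomial.coeff_mul, Polynomial.coeff_mul]
  apply Finset.sum_congr rfl
  intro p hp
  rw [Finset.HasAntidiagonal.mem_antidiagonal] at hp
  have : p.2 ≤ N := le_trans (by omega) hr
  rw [h p.2 this]

lemma Cg.mul_right {N : ℕ} (c : Polynomial ℤ) {a b} (h : Cg N a b) : Cg N (a * c) (b * c) := by
  rw [mul_comm a c, mul_comm b c]; exact h.mul_left c

lemma Cg_Xpow_mul (N M : ℕ) (hM : N < M) (a : Polynomial ℤ) : Cg N (a * X^M) 0 := by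
  intro r hr
  rw [Polynomial.coeff_mul_X_pow']
  simp [Nat.not_le.mpr (lt_of_le_of_lt hr hM)]

lemma Cg_Xpow (N M : ℕ) (hM : N < M) : Cg N ((X:Polynomial ℤ)^M) 0 := by
  have := Cg_Xpow_mul N M hM 1
  simpa using this

/-- truncated geometric series `∑_{i=0}^{N} X^{k i}` -/
noncomputable def gg (N k : ℕ) : Polynomial ℤ := ∑ i ∈ Finset.range (N+1), X^(k*i)

lemma gg_inv (N k : ℕ) (hk : 1 ≤ k) : Cg N ((1 - X^k) * gg N k) 1 := by
  have h := geom_sum_mul ((X:Polynomial ℤ)^k) (N+1)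
  have h2 : (1 - X^k) * gg N k = 1 - X^(k*(N+1)) := by
    have : gg N k = ∑ i ∈ Finset.range (N+1), ((X:Polynomial ℤ)^k)^i := by
      simp [gg, ← pow_mul]
    rw [this]
    have := congrArg (fun p => -p) h
    calc (1 - X^k) * ∑ i ∈ Finset.range (N+1), ((X:Polynomial ℤ)^k)^i
        = -((∑ i ∈ Finset.range (N+1), ((X:Polynomial ℤ)^k)^i) * (X^k - 1)) := by ring
      _ = -(((X:Polynomial ℤ)^k)^(N+1) - 1) := by rw [h]
      _ = 1 - X^(k*(N+1)) := by rw [← pow_mul]; ring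
  rw [h2]
  intro r hr
  have : ((X:Polynomial ℤ)^(k*(N+1))).coeff r = 0 := by
    apply Cg_Xpow N _ _ r hr
    calc N < N+1 := by omega
      _ ≤ k*(N+1) := by nlinarith
  simp [Polynomial.coeff_sub, this]

lemma Cg_cancel {N k : ℕ} (hk : 1 ≤ k) {a b : Polynomial ℤ}
    (h : Cg N ((1 - X^k) * a) ((1 - X^k) * b)) : Cg N a b := by
  have g1 : Cg N a (gg N k * ((1 - X^k) * a)) := by
    have := (gg_inv N k hk).mul_right a
    have e : (1 - X^k) * gg N k * a = gg N k * ((1-X^k) * a) := by ring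
    rw [e] at this
    simpa using this.symm'
  have g2 : Cg N (gg N k * ((1 - X^k) * b)) b := by
    have := (gg_inv N k hk).mul_right b
    have e : (1 - X^k) * gg N k * b = gg N k * ((1-X^k) * b) := by ring
    rw [e] at this
    simpa using this
  exact (g1.trans' ((h.mul_left (gg N k)).trans' g2))

/-! ### The descent -/

noncomputable def Pk (j : ℕ) : Polynomial ℤ := ∏ i ∈ Finset.Icc 1 j, (1 - X^i)
noncomputable def Sk (N k : ℕ) : Polynomial ℤ := ∑ m ∈ Finset.Icc k N, X^m * gg N m

lemma Pk_succ (k : ℕ) (hk : 1 ≤ k) : Pk k = Pk (k-1) * (1 - X^k) := by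
  obtain ⟨j, rfl⟩ : ∃ j, k = j + 1 := ⟨k - 1, by omega⟩
  simp only [Pk, Nat.add_sub_cancel]
  exact Finset.prod_Icc_succ_top (by omega) _

lemma Sk_succ (N k : ℕ) (hk1 : 1 ≤ k) (hk : k ≤ N) :
    Sk N k = X^k * gg N k + Sk N (k+1) := by
  simp only [Sk]
  rw [show Finset.Icc k N = insert k (Finset.Icc (k+1) N) by
    ext x; simp [Finset.mem_Icc, Finset.mem_insert]; omega]
  rw [Finset.sum_insert (by simp only [Finset.mem_Icc]; omega)]

lemma hh_cong (N k : ℕ) (hk : 1 ≤ k) : Cg N (hh N k) (Pk (k-1)) := by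
  induction k with
  | zero => omega
  | succ k ih =>
      rcases Nat.eq_or_lt_of_le hk with h1 | h1
      · -- k+1 = 1
        have : k = 0 := by omega
        subst this
        rw [hh_one]
        simp only [Nat.add_sub_cancel, Pk]
        rw [show Finset.Icc 1 0 = ∅ by rfl, Finset.prod_empty]
        exact Cg.refl N 1
      · have hk' : 1 ≤ k := by omega
        rw [hh_succ, Nat.add_sub_cancel, Pk_succ k hk']
        have c1 : Cg N ((1 - X^k) * hh N k) ((1-X^k) * Pk (k-1)) :=
          (ih hk').mul_left _
        have c2 : Cg N ((X:Polynomial ℤ)^(k*(N+1))) 0 := by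
          apply Cg_Xpow
          calc N < N+1 := by omega
            _ ≤ k*(N+1) := by nlinarith
        have := c1.add' c2
        simp only [add_zero] at this
        rw [mul_comm (Pk (k-1))]
        exact this

lemma descent (N : ℕ) : ∀ d, d ≤ N →
    Cg N (X^(N+1-d) * ee N (N+1-d)) (Pk (N-d) * Sk N (N+1-d)) := by
  intro d
  induction d with
  | zero =>
      intro _
      simp only [Nat.sub_zero]
      have l : Cg N ((X:Polynomial ℤ)^(N+1) * ee N (N+1)) 0 := by
        have := Cg_Xpow_mul N (N+1) (by omega) (ee N (N+1))
        rw [mul_comm] at this; exact this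
      have r : Sk N (N+1) = 0 := by
        simp [Sk, show Finset.Icc (N+1) N = ∅ from Finset.Icc_eq_empty (by omega)]
      rw [r, mul_zero]
      exact l
  | succ d ih =>
      intro hd
      set k := N - d with hkdef
      have hk1 : 1 ≤ k := by omega
      have hNd : N + 1 - (d+1) = k := by omega
      have hNd2 : N + 1 - d = k + 1 := by omega
      have hPk : N - (d+1) = k - 1 := by omega
      rw [hNd, hPk]
      have ihh := ih (by omega)
      rw [hNd2] at ihh
      -- identity I multiplied by X^k
      have key : (1 - X^k) * (X^k * ee N k)
          = X^(k+1) * ee N (k+1) + X^k * hh N k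
            + (-((N+1:ℕ) : Polynomial ℤ)) * X^(k*(N+1)) := by
        have h := ee_identity N k
        calc (1 - X^k) * (X^k * ee N k) = X^k * ((1 - X^k) * ee N k) := by ring
          _ = X^(k+1) * ee N (k+1) + X^k * hh N k
              + (-((N+1:ℕ) : Polynomial ℤ)) * (X^k * X^(k*N)) := by
              linear_combination (-((X:Polynomial ℤ)^k)) * h
          _ = _ := by rw [← pow_add, show k + k*N = k*(N+1) by ring]
      apply Cg_cancel hk1 (k := k)
      rw [key]
      -- RHS target: (1-X^k) * (Pk (k-1) * Sk N k)
      have hkN : k ≤ N := by omega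
      have c1 : Cg N (X^(k+1) * ee N (k+1)) (Pk k * Sk N (k+1)) := ihh
      have c2 : Cg N (X^k * hh N k) (X^k * Pk (k-1)) := (hh_cong N k hk1).mul_left _
      have c3 : Cg N ((-((N+1:ℕ) : Polynomial ℤ)) * X^(k*(N+1))) 0 := by
        have hz := Cg_Xpow N (k*(N+1)) (by nlinarith)
        have := hz.mul_left (-((N+1:ℕ) : Polynomial ℤ))
        simpa using this
      have cX : Cg N ((X:Polynomial ℤ)^k) ((1 - X^k) * (X^k * gg N k)) := by
        have h0 := (gg_inv N k hk1).mul_left ((X:Polynomial ℤ)^k)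
        rw [mul_one] at h0
        have := h0.symm'
        rw [show (X:Polynomial ℤ)^k * ((1 - X^k) * gg N k)
            = (1 - X^k) * (X^k * gg N k) by ring] at this
        exact this
      have c2' : Cg N (X^k * hh N k) (Pk (k-1) * ((1 - X^k) * (X^k * gg N k))) := by
        have step2 := cX.mul_left (Pk (k-1))
        refine c2.trans' ?_
        rw [mul_comm ((X:Polynomial ℤ)^k) (Pk (k-1))]
        exact step2
      have call := (c1.add' c2').add' c3
      rw [add_zero] at call
      refine call.trans' ?_
      rw [show Pk k * Sk N (k+1) + Pk (k-1) * ((1 - X^k) * (X^k * gg N k))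
          = (1 - X^k) * (Pk (k-1) * (X^k * gg N k + Sk N (k+1))) by
            rw [Pk_succ k hk1]; ring]
      rw [← Sk_succ N k hk1 hkN]
      exact Cg.refl N _
  

lemma descent_one (N : ℕ) : Cg N (X * ee N 1) (Sk N 1) := by
  have h := descent N N (le_refl N)
  rw [show N + 1 - N = 1 by omega, Nat.sub_self] at h
  rw [show (Pk 0 : Polynomial ℤ) = 1 by simp [Pk], one_mul, pow_one] at h
  exact h

lemma coeff_Xgg (N m r : ℕ) (hm : 1 ≤ m) (hr1 : 1 ≤ r) (hrN : r ≤ N) :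
    (X^m * gg N m).coeff r = if m ∣ r then 1 else 0 := by
  rw [gg, Finset.mul_sum]
  simp_rw [← pow_add]
  rw [Polynomial.finset_sum_coeff]
  simp_rw [Polynomial.coeff_X_pow]
  by_cases hd : m ∣ r
  · obtain ⟨c, rfl⟩ := hd
    have hc1 : 1 ≤ c := by nlinarith
    obtain ⟨c', rfl⟩ : ∃ c', c = c' + 1 := ⟨c - 1, by omega⟩
    rw [Finset.sum_eq_single c']
    · rw [if_pos (by ring : m * (c' + 1) = m + m * c'), if_pos ⟨c' + 1, rfl⟩]
    · intro i hi hne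
      rw [if_neg]
      intro hcon
      apply hne
      have h2 : m * (c' + 1) = m * (i + 1) := by rw [hcon]; ring
      have := Nat.eq_of_mul_eq_mul_left (by omega : 0 < m) h2
      omega
    · intro hc
      exfalso; apply hc
      have hle : c' + 1 ≤ m * (c' + 1) := Nat.le_mul_of_pos_left _ (by omega)
      simp only [Finset.mem_range]; omega
  · rw [if_neg hd]
    apply Finset.sum_eq_zero
    intro i _
    rw [if_neg]
    intro hcon
    exact hd ⟨i + 1, by rw [hcon]; ring⟩

lemma coeff_Sk1 (N r : ℕ) (hr1 : 1 ≤ r) (hrN : r ≤ N) :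
    (Sk N 1).coeff r = (r.divisors.card : ℤ) := by
  rw [Sk, Polynomial.finset_sum_coeff]
  have h1 : ∀ m ∈ Finset.Icc 1 N, (X^m * gg N m).coeff r = if m ∣ r then (1:ℤ) else 0 := by
    intro m hm
    rw [Finset.mem_Icc] at hm
    exact coeff_Xgg N m r hm.1 hr1 hrN
  rw [Finset.sum_congr rfl h1]
  have hfil : Finset.filter (· ∣ r) (Finset.Icc 1 N) = r.divisors := by
    ext m
    simp only [Finset.mem_filter, Finset.mem_Icc, Nat.mem_divisors]
    constructor
    · rintro ⟨⟨ha, hb⟩, h3⟩; exact ⟨h3, by omega⟩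
    · rintro ⟨ha, hb⟩
      have hm1 : 1 ≤ m := Nat.pos_of_dvd_of_pos ha (by omega)
      have hmr : m ≤ r := Nat.le_of_dvd (by omega) ha
      exact ⟨⟨hm1, le_trans hmr hrN⟩, ha⟩
  calc (∑ x ∈ Finset.Icc 1 N, if x ∣ r then (1:ℤ) else 0)
      = ∑ _x ∈ Finset.filter (· ∣ r) (Finset.Icc 1 N), (1:ℤ) := (Finset.sum_filter _ _).symm
    _ = (r.divisors.card : ℤ) := by rw [hfil]; simp

theorem Wp_coeff_divisors (N r : ℕ) (h1 : 1 ≤ r) (h2 : r ≤ N) :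
    (Wp N).coeff r = -(r.divisors.card : ℤ) := by
  have hW := congrArg (fun p => Polynomial.coeff p r) (W_eq N)
  simp only [Polynomial.coeff_sub] at hW
  rw [hW]
  have hc : ((N+1:ℕ) : Polynomial ℤ).coeff r = 0 := by
    rw [Polynomial.coeff_natCast_ite, if_neg (by omega), Nat.cast_zero]
  rw [hc]
  have := descent_one N r h2
  rw [this, coeff_Sk1 N r h1 h2]
  ring

lemma tri_succ (n : ℕ) : tri (n+1) = tri n + (n+1) := by
  have h : (n+1)*(n+1+1) = n*(n+1) + (n+1)*2 := by ring
  rw [tri, tri, h, Nat.add_mul_div_right _ _ (by norm_num : (0:ℕ) < 2)]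

lemma Wp_coeff_zero (m : ℕ) : (Wp m).coeff 0 = (m+1 : ℤ) := by
  induction m with
  | zero => simp [Wp]
  | succ m ih =>
      show ((1 - X^(m+1)) * Wp m + 1).coeff 0 = _
      have h0 : ((1:Polynomial ℤ) - X^(m+1)).coeff 0 = 1 := by
        rw [coeff_sub, coeff_one, coeff_X_pow, if_pos rfl, if_neg (by omega)]
        ring
      rw [coeff_add, mul_coeff_zero, h0, one_mul, ih, coeff_one, if_pos rfl]
      push_cast; ring

lemma Wp_natDegree (m : ℕ) : (Wp m).natDegree ≤ tri m := by
  induction m with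
  | zero => simp [Wp, tri]
  | succ m ih =>
      show ((1 - X^(m+1)) * Wp m + 1).natDegree ≤ tri (m+1)
      apply le_trans (natDegree_add_le _ _)
      simp only [natDegree_one, max_le_iff]
      constructor
      · apply le_trans (natDegree_mul_le)
        have h1 : (1 - X^(m+1) : Polynomial ℤ).natDegree ≤ m+1 := by
          apply le_trans (natDegree_sub_le _ _)
          simp [natDegree_X_pow]
        rw [tri_succ]
        omega
      · omega

lemma Wp_coeff_gt (m r : ℕ) (h : tri m < r) : (Wp m).coeff r = 0 :=
  coeff_eq_zero_of_natDegree_lt (lt_of_le_of_lt (Wp_natDegree m) h)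

lemma Wp_coeff_succ (m r : ℕ) (hr : 1 ≤ r) :
    (Wp (m+1)).coeff r
      = (Wp m).coeff r - (if m+1 ≤ r then (Wp m).coeff (r - (m+1)) else 0) := by
  show ((1 - X^(m+1)) * Wp m + 1).coeff r = _
  rw [coeff_add, coeff_one, if_neg (by omega), add_zero, sub_mul, one_mul, coeff_sub,
    mul_comm, coeff_mul_X_pow']

lemma Amat_mulVec (n : ℕ) (v : Fin (tri (n+1)) → ℤ) (k : Fin (tri (n+2))) :
    (Amat (n+2) (n+1)).mulVec v k
      = (if h : (k:ℕ) < tri (n+1) then -v ⟨k, h⟩ else 0)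
        + (if h : n + 2 ≤ (k:ℕ) then v ⟨(k:ℕ) - (n+2), by
              have hk := k.isLt
              have ht : tri (n+2) = tri (n+1) + (n+2) := tri_succ (n+1)
              omega⟩ else 0) := by
  have hsplit : ∀ l : Fin (tri (n+1)),
      Amat (n+2) (n+1) k l * v l
      = (if (k:ℕ) = (l:ℕ) then -v l else 0)
        + (if (k:ℕ) = (l:ℕ) + (n+2) then v l else 0) := by
    intro l
    unfold Amat
    by_cases h1 : (k:ℕ) = (l:ℕ)
    · rw [if_pos h1, if_pos h1, if_neg (by omega), add_zero]; ring
    · rw [if_neg h1, if_neg h1]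
      by_cases h2 : (k:ℕ) = (l:ℕ) + (n+2) <;> simp [h2]
  unfold Matrix.mulVec dotProduct
  rw [Finset.sum_congr rfl (fun l _ => hsplit l), Finset.sum_add_distrib]
  congr 1
  · by_cases h : (k:ℕ) < tri (n+1)
    · rw [dif_pos h]
      rw [Finset.sum_eq_single (⟨(k:ℕ), h⟩ : Fin (tri (n+1)))]
      · rw [if_pos rfl]
      · intro l _ hne
        rw [if_neg]
        intro hc
        exact hne (by apply Fin.ext; simp [← hc])
      · intro hc; exact absurd (Finset.mem_univ _) hc
    · rw [dif_neg h]
      apply Finset.sum_eq_zero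
      intro l _
      rw [if_neg]
      have := l.isLt
      omega
  · by_cases h : n + 2 ≤ (k:ℕ)
    · rw [dif_pos h]
      have hlt : (k:ℕ) - (n+2) < tri (n+1) := by
        have hk := k.isLt
        have ht : tri (n+2) = tri (n+1) + (n+2) := tri_succ (n+1)
        omega
      rw [Finset.sum_eq_single (⟨(k:ℕ) - (n+2), hlt⟩ : Fin (tri (n+1)))]
      · rw [if_pos (by simp; omega)]
      · intro l _ hne
        rw [if_neg]
        intro hc
        exact hne (by apply Fin.ext; simp; omega)
      · intro hc; exact absurd (Finset.mem_univ _) hc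
    · rw [dif_neg h]
      apply Finset.sum_eq_zero
      intro l _
      rw [if_neg]
      have := l.isLt
      omega

theorem Evec_eq_Wp : ∀ (m : ℕ), 1 ≤ m → ∀ (k : Fin (tri m)),
    Evec m k = -(Wp m).coeff (tri m - (k:ℕ)) := by
  intro m
  induction m with
  | zero => omega
  | succ m ih =>
      intro _ k
      match m, k with
      | 0, k =>
          have e1 : tri (0+1) = 1 := rfl
          have hk : (k:ℕ) = 0 := by
            have h2 := k.isLt
            omega
          have h1 : Evec 1 k = 1 := by
            show Ivec 1 k = 1
            rw [Ivec, if_pos (by rw [hk]; rfl)]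
          have hW0 : Wp 0 = 1 := rfl
          have h2 : (Wp (0+1)).coeff 1 = -1 := by
            show ((1 - X^(0+1)) * Wp 0 + 1).coeff 1 = -1
            rw [hW0, mul_one]
            simp [coeff_sub, coeff_one, coeff_X_pow]
          rw [h1, hk, e1, h2]
          norm_num
      | (n+1), k =>
          have ht : tri (n+2) = tri (n+1) + (n+2) := tri_succ (n+1)
          have htri : tri (n+2-1) = tri (n+1) := rfl
          have hk : (k:ℕ) < tri (n+2) := k.isLt
          have hr1 : 1 ≤ tri (n+2) - (k:ℕ) := by omega
          have hEv : Evec (n+2) k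
              = (Amat (n+2) (n+1)).mulVec (Evec (n+1)) k + ((n+2:ℕ) : ℤ) * Ivec (n+2) k := by
            show (((Amat (n + 2) (n + 1)).mulVec (Evec (n + 1))
              + ((n + 2 : ℕ) : ℤ) • Ivec (n + 2)) : Fin (tri (n+2)) → ℤ) k = _
            simp [Pi.add_apply, Pi.smul_apply, smul_eq_mul]
          rw [hEv, Amat_mulVec n (Evec (n+1)) k]
          have hWc : (Wp (n+2)).coeff (tri (n+2) - (k:ℕ))
              = (Wp (n+1)).coeff (tri (n+2) - (k:ℕ))
                - (if n+2 ≤ tri (n+2) - (k:ℕ)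
                    then (Wp (n+1)).coeff ((tri (n+2) - (k:ℕ)) - (n+2)) else 0) :=
            Wp_coeff_succ (n+1) _ hr1
          rw [hWc]
          have hIH := ih (by omega)
          have hB : (if h : (k:ℕ) < tri (n+1) then -Evec (n+1) ⟨k, h⟩ else 0)
                + ((n+2:ℕ) : ℤ) * Ivec (n+2) k
              = (if n+2 ≤ tri (n+2) - (k:ℕ)
                  then (Wp (n+1)).coeff ((tri (n+2) - (k:ℕ)) - (n+2)) else 0) := by
            rcases lt_trichotomy ((k:ℕ)) (tri (n+1)) with hlt | heq | hgt
            · rw [dif_pos hlt, hIH ⟨k, hlt⟩]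
              have hIv : Ivec (n+2) k = 0 := by
                rw [Ivec, htri, if_neg (by omega)]
              rw [hIv, mul_zero, add_zero, if_pos (by omega)]
              have harg : tri (n+1) - ((⟨(k:ℕ), hlt⟩ : Fin (tri (n+1))):ℕ)
                  = (tri (n+2) - (k:ℕ)) - (n+2) := by
                simp only [Fin.val_mk]
                omega
              rw [harg]; ring
            · rw [dif_neg (by omega)]
              have hIv : Ivec (n+2) k = 1 := by
                rw [Ivec, htri, if_pos heq]
              rw [hIv, mul_one, zero_add, if_pos (by omega)]
              have harg : (tri (n+2) - (k:ℕ)) - (n+2) = 0 := by omega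
              rw [harg, Wp_coeff_zero]
              push_cast; ring
            · rw [dif_neg (by omega)]
              have hIv : Ivec (n+2) k = 0 := by
                rw [Ivec, htri, if_neg (by omega)]
              rw [hIv, mul_zero, add_zero, if_neg (by omega)]
          have hA : (if h : n + 2 ≤ (k:ℕ) then Evec (n+1) ⟨(k:ℕ) - (n+2), by omega⟩ else 0)
              = -(Wp (n+1)).coeff (tri (n+2) - (k:ℕ)) := by
            by_cases h : n + 2 ≤ (k:ℕ)
            · rw [dif_pos h, hIH ⟨(k:ℕ) - (n+2), by omega⟩]
              have harg : tri (n+1) - ((⟨(k:ℕ) - (n+2), by omega⟩ : Fin (tri (n+1))):ℕ)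
                  = tri (n+2) - (k:ℕ) := by
                simp only [Fin.val_mk]
                omega
              rw [harg]
            · rw [dif_neg h]
              rw [Wp_coeff_gt (n+1) _ (by omega)]
              ring
          rw [add_right_comm, hB, hA]
          ring


end EvecProofAux

/-- For every positive integer `n`, the entry of `E_n` in (1-based)
position `t(n-1)+1` (i.e. `0`-based index `t(n-1)`) equals `d(n)`, the number of
positive divisors of `n`. -/
theorem Evec_entry_eq_card_divisors (n : ℕ) (hn : 0 < n) (k : Fin (tri n))
    (hk : (k : ℕ) = tri (n - 1)) :
    Evec n k = (n.divisors.card : ℤ) := by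
  obtain ⟨m, rfl⟩ : ∃ m, n = m + 1 := ⟨n - 1, by omega⟩
  rw [Evec_eq_Wp (m+1) (by omega) k]
  have ht : tri (m+1) = tri m + (m+1) := tri_succ m
  have hk' : (k : ℕ) = tri m := hk
  rw [hk']
  have harg : tri (m+1) - tri m = m+1 := by omega
  rw [harg, Wp_coeff_divisors (m+1) (m+1) (by omega) (le_refl _)]
  ring
end
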